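/- arXiv:math/0511535 — 3 statements merged into one kernel-verified Lean document; each statement's English description precedes it below -/
import Mathlib

section
/- Let H be a Hopf algebra over a field k with antipode S, and let λ : H → k be a left integral for H in H⁎ (h₁·λ(h₂) = λ(h)·1 for all h ∈ H) such that λ(h₂·S(h₁)) = ε(h) for all h ∈ H. Then λ(1) = 1 and H is involutory, i.e. S²(h) = h for all h ∈ H. -/
/-!
Helper definitions for Sweedler-notation expressions in a Hopf algebra `H` over a field `k`.
-/

open TensorProduct

variable {k H : Type*} [Field k] [Ring H] [HopfAlgebra k H]

/-- `swl f h = f(h₁) • h₂` in Sweedler notation. -/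
noncomputable def swl (f : H →ₗ[k] k) : H →ₗ[k] H :=
  (TensorProduct.lid k H).toLinearMap ∘ₗ (f.rTensor H) ∘ₗ Coalgebra.comul

/-- `swr f h = f(h₂) • h₁` in Sweedler notation. -/
noncomputable def swr (f : H →ₗ[k] k) : H →ₗ[k] H :=
  (TensorProduct.rid k H).toLinearMap ∘ₗ (f.lTensor H) ∘ₗ Coalgebra.comul

/-- `sw2 f g h = f(h₁) * g(h₂)`, an element of `H`, in Sweedler notation. -/
noncomputable def sw2 (f g : H →ₗ[k] H) : H →ₗ[k] H :=
  (LinearMap.mul' k H) ∘ₗ (TensorProduct.map f g) ∘ₗ Coalgebra.comul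

/-- `sw2k f g h = f(h₁) * g(h₂)`, a scalar, in Sweedler notation. -/
noncomputable def sw2k (f g : H →ₗ[k] k) : H →ₗ[k] k :=
  (LinearMap.mul' k k) ∘ₗ (TensorProduct.map f g) ∘ₗ Coalgebra.comul

/-- `comul3 h = (h₁ ⊗ h₂) ⊗ h₃`, the iterated comultiplication `(Δ ⊗ id)Δ`. -/
noncomputable def comul3 : H →ₗ[k] (H ⊗[k] H) ⊗[k] H :=
  (LinearMap.rTensor H Coalgebra.comul) ∘ₗ Coalgebra.comul

/-- `sw3 f g e h = f(h₁) * g(h₂) * e(h₃)`, an element of `H`, in Sweedler notation. -/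
noncomputable def sw3 (f g e : H →ₗ[k] H) : H →ₗ[k] H :=
  (LinearMap.mul' k H) ∘ₗ
    (TensorProduct.map ((LinearMap.mul' k H) ∘ₗ TensorProduct.map f g) e) ∘ₗ comul3

namespace Stmt15

open Coalgebra HopfAlgebra LinearMap

lemma sum_counit_right_smul {a : H} (r : Coalgebra.Repr k a (H × H)) :
    ∑ i ∈ r.index, Coalgebra.counit (R := k) (r.right i) • r.left i = a := by
  calc ∑ i ∈ r.index, Coalgebra.counit (R := k) (r.right i) • r.left i
      = (TensorProduct.rid k H)
        (((Coalgebra.counit (R := k) (A := H)).lTensor H) (Coalgebra.comul a)) := by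
        rw [← r.eq]
        simp only [map_sum, LinearMap.lTensor_tmul, LinearMap.rTensor_tmul,
          TensorProduct.rid_tmul, TensorProduct.lid_tmul]
    _ = a := by simp

lemma sum_counit_left_smul {a : H} (r : Coalgebra.Repr k a (H × H)) :
    ∑ i ∈ r.index, Coalgebra.counit (R := k) (r.left i) • r.right i = a := by
  calc ∑ i ∈ r.index, Coalgebra.counit (R := k) (r.left i) • r.right i
      = (TensorProduct.lid k H)
        (((Coalgebra.counit (R := k) (A := H)).rTensor H) (Coalgebra.comul a)) := by
        rw [← r.eq]
        simp only [map_sum, LinearMap.lTensor_tmul, LinearMap.rTensor_tmul,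
          TensorProduct.rid_tmul, TensorProduct.lid_tmul]
    _ = a := by simp

lemma ex3G {V : Type*} [AddCommMonoid V] [Module k V]
    (G : H ⊗[k] (H ⊗[k] H) →ₗ[k] V) {a : H} (r : Coalgebra.Repr k a (H × H))
    (a₁ : (i : H × H) → Coalgebra.Repr k (r.left i) (H × H))
    (a₂ : (i : H × H) → Coalgebra.Repr k (r.right i) (H × H)) :
    ∑ i ∈ r.index, ∑ j ∈ (a₁ i).index,
      G ((a₁ i).left j ⊗ₜ[k] ((a₁ i).right j ⊗ₜ[k] r.right i)) =
    ∑ i ∈ r.index, ∑ j ∈ (a₂ i).index,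
      G (r.left i ⊗ₜ[k] ((a₂ i).left j ⊗ₜ[k] (a₂ i).right j)) := by
  have h2 := congrArg G (Coalgebra.sum_tmul_tmul_eq r a₁ a₂)
  simpa [map_sum] using h2

local notation "𝐒" => (HopfAlgebra.antipode (R := k) (A := H))

section Conv

variable {B : Type*} [Semiring B] [Algebra k B]

noncomputable def conv (f g : H →ₗ[k] B) : H →ₗ[k] B :=
  (LinearMap.mul' k B) ∘ₗ (TensorProduct.map f g) ∘ₗ Coalgebra.comul

lemma conv_repr (f g : H →ₗ[k] B) {a : H} (r : Coalgebra.Repr k a (H × H)) :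
    conv f g a = ∑ i ∈ r.index, f (r.left i) * g (r.right i) := by
  rw [conv]
  simp only [LinearMap.comp_apply]
  rw [← r.eq]
  simp only [map_sum, TensorProduct.map_tmul, LinearMap.mul'_apply]

noncomputable def cunit : H →ₗ[k] B := (Algebra.linearMap k B) ∘ₗ Coalgebra.counit

lemma conv_cunit_left (f : H →ₗ[k] B) : conv cunit f = f := by
  ext a
  have r := Coalgebra.Repr.arbitrary k a
  rw [conv_repr cunit f r]
  calc ∑ i ∈ r.index, cunit (r.left i) * f (r.right i)
      = ∑ i ∈ r.index, Coalgebra.counit (R := k) (r.left i) • f (r.right i) := by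
        apply Finset.sum_congr rfl; intro i _
        rw [cunit, LinearMap.comp_apply, Algebra.linearMap_apply, ← Algebra.smul_def]
    _ = f (∑ i ∈ r.index, Coalgebra.counit (R := k) (r.left i) • r.right i) := by
        simp [map_sum]
    _ = f a := by rw [sum_counit_left_smul]

lemma conv_cunit_right (f : H →ₗ[k] B) : conv f cunit = f := by
  ext a
  have r := Coalgebra.Repr.arbitrary k a
  rw [conv_repr f cunit r]
  calc ∑ i ∈ r.index, f (r.left i) * cunit (r.right i)
      = ∑ i ∈ r.index, Coalgebra.counit (R := k) (r.right i) • f (r.left i) := by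
        apply Finset.sum_congr rfl; intro i _
        rw [cunit, LinearMap.comp_apply, Algebra.linearMap_apply, ← Algebra.commutes,
          ← Algebra.smul_def]
    _ = f (∑ i ∈ r.index, Coalgebra.counit (R := k) (r.right i) • r.left i) := by
        simp [map_sum]
    _ = f a := by rw [sum_counit_right_smul]

lemma conv_assoc (f g e : H →ₗ[k] B) : conv (conv f g) e = conv f (conv g e) := by
  ext a
  have r := Coalgebra.Repr.arbitrary k a
  have rl : (i : H × H) → Coalgebra.Repr k (r.left i) (H × H) := fun i => Coalgebra.Repr.arbitrary k _
  have rr : (i : H × H) → Coalgebra.Repr k (r.right i) (H × H) := fun i => Coalgebra.Repr.arbitrary k _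
  set G1 : H ⊗[k] (H ⊗[k] H) →ₗ[k] B :=
    (LinearMap.mul' k B) ∘ₗ ((LinearMap.mul' k B).lTensor B) ∘ₗ
      (TensorProduct.map f (TensorProduct.map g e)) with hG1
  have hG1ev : ∀ x y z : H, G1 (x ⊗ₜ[k] (y ⊗ₜ[k] z)) = f x * (g y * e z) := by
    intro x y z; simp [hG1]
  have L : conv (conv f g) e a = ∑ i ∈ r.index, ∑ j ∈ (rl i).index,
      G1 ((rl i).left j ⊗ₜ[k] ((rl i).right j ⊗ₜ[k] r.right i)) := by
    rw [conv_repr _ _ r]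
    apply Finset.sum_congr rfl; intro i _
    rw [conv_repr f g (rl i), Finset.sum_mul]
    apply Finset.sum_congr rfl; intro j _
    rw [hG1ev, mul_assoc]
  have R : conv f (conv g e) a = ∑ i ∈ r.index, ∑ j ∈ (rr i).index,
      G1 (r.left i ⊗ₜ[k] ((rr i).left j ⊗ₜ[k] (rr i).right j)) := by
    rw [conv_repr _ _ r]
    apply Finset.sum_congr rfl; intro i _
    rw [conv_repr g e (rr i), Finset.mul_sum]
    apply Finset.sum_congr rfl; intro j _
    rw [hG1ev]
  rw [L, R, ex3G G1 r rl rr]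

end Conv


noncomputable def Tmap : H →ₗ[k] H ⊗[k] H :=
  (TensorProduct.map 𝐒 𝐒) ∘ₗ (TensorProduct.comm k H H).toLinearMap ∘ₗ Coalgebra.comul

lemma conv_DS_D :
    conv ((Coalgebra.comul (R := k) (A := H)) ∘ₗ 𝐒) (Coalgebra.comul (R := k) (A := H))
      = cunit := by
  ext a
  have r := Coalgebra.Repr.arbitrary k a
  rw [conv_repr _ _ r]
  calc ∑ i ∈ r.index, ((Coalgebra.comul (R := k) (A := H)) ∘ₗ 𝐒) (r.left i) *
        Coalgebra.comul (r.right i)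
      = ∑ i ∈ r.index, Coalgebra.comul (R := k) (𝐒 (r.left i) * r.right i) := by
        simp [Bialgebra.comul_mul]
    _ = Coalgebra.comul (R := k) (∑ i ∈ r.index, 𝐒 (r.left i) * r.right i) := by
        rw [map_sum]
    _ = Coalgebra.comul (R := k) (algebraMap k H (Coalgebra.counit (R := k) a)) := by
        rw [HopfAlgebra.sum_antipode_mul_eq_algebraMap_counit r]
    _ = cunit a := by
        rw [Bialgebra.comul_algebraMap]; simp [cunit]

noncomputable def Psi4 : (H ⊗[k] H) ⊗[k] (H ⊗[k] H) →ₗ[k] H ⊗[k] H :=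
  (TensorProduct.map (LinearMap.mul' k H) (LinearMap.mul' k H)) ∘ₗ
    (TensorProduct.tensorTensorTensorComm k H H H H).toLinearMap ∘ₗ
    (TensorProduct.map LinearMap.id
      ((TensorProduct.map 𝐒 𝐒) ∘ₗ (TensorProduct.comm k H H).toLinearMap))

lemma Psi4_eval (t : H ⊗[k] H) (c d : H) :
    Psi4 (t ⊗ₜ[k] (c ⊗ₜ[k] d)) = t * ((𝐒 d) ⊗ₜ[k] (𝐒 c)) := by
  induction t using TensorProduct.induction_on with
  | zero => simp [TensorProduct.zero_tmul]
  | tmul x y =>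
      simp [Psi4, TensorProduct.tensorTensorTensorComm_tmul,
        Algebra.TensorProduct.tmul_mul_tmul]
  | add u v hu hv => simp [TensorProduct.add_tmul, hu, hv, add_mul]

lemma conv_D_T :
    conv (Coalgebra.comul (R := k) (A := H)) Tmap = cunit := by
  ext a
  have r := Coalgebra.Repr.arbitrary k a
  have rl : (i : H × H) → Coalgebra.Repr k (r.left i) (H × H) := fun i => Coalgebra.Repr.arbitrary k _
  have rr : (i : H × H) → Coalgebra.Repr k (r.right i) (H × H) := fun i => Coalgebra.Repr.arbitrary k _
  have rx : (i : H × H) → (j : H × H) → Coalgebra.Repr k ((rl i).left j) (H × H) :=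
    fun i j => Coalgebra.Repr.arbitrary k _
  have rm : (i : H × H) → (j : H × H) → Coalgebra.Repr k ((rl i).right j) (H × H) :=
    fun i j => Coalgebra.Repr.arbitrary k _
  set G4 : H ⊗[k] (H ⊗[k] H) →ₗ[k] H ⊗[k] H :=
    Psi4 ∘ₗ ((Coalgebra.comul (R := k) (A := H)).rTensor (H ⊗[k] H)) with hG4def
  have hG4 : ∀ (u c d : H),
      G4 (u ⊗ₜ[k] (c ⊗ₜ[k] d)) = Coalgebra.comul (R := k) u * ((𝐒 d) ⊗ₜ[k] (𝐒 c)) := by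
    intro u c d
    simp [hG4def, Psi4_eval]
  calc conv (Coalgebra.comul (R := k) (A := H)) Tmap a
      = ∑ i ∈ r.index, Coalgebra.comul (R := k) (r.left i) * Tmap (r.right i) := conv_repr _ _ r
    _ = ∑ i ∈ r.index, ∑ j ∈ (rr i).index,
        G4 (r.left i ⊗ₜ[k] ((rr i).left j ⊗ₜ[k] (rr i).right j)) := by
        apply Finset.sum_congr rfl; intro i _
        have hT : Tmap (r.right i) = ∑ j ∈ (rr i).index,
            (𝐒 ((rr i).right j)) ⊗ₜ[k] (𝐒 ((rr i).left j)) := by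
          rw [Tmap]
          simp only [LinearMap.comp_apply]
          rw [← (rr i).eq]
          simp [map_sum]
        rw [hT, Finset.mul_sum]
        apply Finset.sum_congr rfl; intro j _
        rw [hG4]
    _ = ∑ i ∈ r.index, ∑ j ∈ (rl i).index,
        G4 ((rl i).left j ⊗ₜ[k] ((rl i).right j ⊗ₜ[k] r.right i)) := (ex3G G4 r rl rr).symm
    _ = ∑ i ∈ r.index, ∑ j ∈ (rl i).index, ∑ m ∈ (rx i j).index,
        (((rx i j).left m * 𝐒 (r.right i)) ⊗ₜ[k] ((rx i j).right m * 𝐒 ((rl i).right j))) := by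
        apply Finset.sum_congr rfl; intro i _
        apply Finset.sum_congr rfl; intro j _
        rw [hG4, ← (rx i j).eq, Finset.sum_mul]
        apply Finset.sum_congr rfl; intro m _
        rw [Algebra.TensorProduct.tmul_mul_tmul]
    _ = ∑ i ∈ r.index, ∑ j ∈ (rl i).index, ∑ m ∈ (rm i j).index,
        (((rl i).left j * 𝐒 (r.right i)) ⊗ₜ[k] ((rm i j).left m * 𝐒 ((rm i j).right m))) := by
        apply Finset.sum_congr rfl; intro i _
        have hGi : ∀ (p q s : H),
            (TensorProduct.map (LinearMap.mulRight k (𝐒 (r.right i)))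
              ((LinearMap.mul' k H) ∘ₗ (𝐒.lTensor H))) (p ⊗ₜ[k] (q ⊗ₜ[k] s)) =
            (p * 𝐒 (r.right i)) ⊗ₜ[k] (q * 𝐒 s) := by
          intro p q s; simp
        have hex := ex3G (TensorProduct.map (LinearMap.mulRight k (𝐒 (r.right i)))
              ((LinearMap.mul' k H) ∘ₗ (𝐒.lTensor H))) (rl i) (rx i) (rm i)
        simpa only [hGi] using hex
    _ = ∑ i ∈ r.index, ∑ j ∈ (rl i).index,
        (((rl i).left j * 𝐒 (r.right i)) ⊗ₜ[k]
          ((Coalgebra.counit (R := k) ((rl i).right j)) • (1 : H))) := by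
        apply Finset.sum_congr rfl; intro i _
        apply Finset.sum_congr rfl; intro j _
        rw [← TensorProduct.tmul_sum, HopfAlgebra.sum_mul_antipode_eq_smul (rm i j)]
    _ = ∑ i ∈ r.index, (r.left i * 𝐒 (r.right i)) ⊗ₜ[k] (1 : H) := by
        apply Finset.sum_congr rfl; intro i _
        calc ∑ j ∈ (rl i).index,
            (((rl i).left j * 𝐒 (r.right i)) ⊗ₜ[k]
              ((Coalgebra.counit (R := k) ((rl i).right j)) • (1 : H)))
            = ∑ j ∈ (rl i).index,
              (((Coalgebra.counit (R := k) ((rl i).right j) • (rl i).left j) * 𝐒 (r.right i))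
                ⊗ₜ[k] (1 : H)) := by
              apply Finset.sum_congr rfl; intro j _
              rw [TensorProduct.tmul_smul, smul_mul_assoc, ← TensorProduct.smul_tmul']
          _ = (r.left i * 𝐒 (r.right i)) ⊗ₜ[k] (1 : H) := by
              rw [← TensorProduct.sum_tmul, ← Finset.sum_mul, sum_counit_right_smul (rl i)]
    _ = (algebraMap k H (Coalgebra.counit (R := k) a)) ⊗ₜ[k] (1 : H) := by
        rw [← TensorProduct.sum_tmul, HopfAlgebra.sum_mul_antipode_eq_algebraMap_counit r]
    _ = cunit a := by
        rw [cunit]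
        simp [Algebra.TensorProduct.algebraMap_apply]

lemma comul_antipode_map :
    (Coalgebra.comul (R := k) (A := H)) ∘ₗ 𝐒 = Tmap := by
  calc (Coalgebra.comul (R := k) (A := H)) ∘ₗ 𝐒
      = conv ((Coalgebra.comul (R := k) (A := H)) ∘ₗ 𝐒) cunit := (conv_cunit_right _).symm
    _ = conv ((Coalgebra.comul (R := k) (A := H)) ∘ₗ 𝐒)
        (conv (Coalgebra.comul (R := k) (A := H)) Tmap) := by rw [conv_D_T]
    _ = conv (conv ((Coalgebra.comul (R := k) (A := H)) ∘ₗ 𝐒)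
        (Coalgebra.comul (R := k) (A := H))) Tmap := (conv_assoc _ _ _).symm
    _ = conv cunit Tmap := by rw [conv_DS_D]
    _ = Tmap := conv_cunit_left _

lemma comulS_repr {u : H} (ρ : Coalgebra.Repr k u (H × H)) :
    Coalgebra.comul (R := k) (𝐒 u) =
      ∑ j ∈ ρ.index, (𝐒 (ρ.right j)) ⊗ₜ[k] (𝐒 (ρ.left j)) := by
  have h := congrFun (congrArg DFunLike.coe (comul_antipode_map (k := k) (H := H))) u
  simp only [LinearMap.comp_apply] at h
  rw [h, Tmap]
  simp only [LinearMap.comp_apply]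
  rw [← ρ.eq]
  simp [map_sum]

noncomputable def qq : H ⊗[k] H →ₗ[k] H :=
  (LinearMap.mul' k H) ∘ₗ (TensorProduct.map LinearMap.id 𝐒) ∘ₗ
    (TensorProduct.comm k H H).toLinearMap

noncomputable def qmap : H →ₗ[k] H := qq ∘ₗ Coalgebra.comul

lemma qq_tmul (x y : H) : qq (x ⊗ₜ[k] y) = y * 𝐒 x := by
  simp [qq]

lemma qmap_repr {a : H} (r : Coalgebra.Repr k a (H × H)) :
    qmap (k := k) a = ∑ i ∈ r.index, r.right i * 𝐒 (r.left i) := by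
  rw [qmap]
  simp only [LinearMap.comp_apply]
  rw [← r.eq]
  simp only [map_sum, qq_tmul]

lemma swr_repr (f : H →ₗ[k] k) {a : H} (r : Coalgebra.Repr k a (H × H)) :
    swr f a = ∑ i ∈ r.index, f (r.right i) • r.left i := by
  rw [swr]
  simp only [LinearMap.comp_apply]
  rw [← r.eq]
  simp only [map_sum, LinearMap.lTensor_tmul, LinearEquiv.coe_coe, TensorProduct.rid_tmul]

lemma swl_repr (f : H →ₗ[k] k) {a : H} (r : Coalgebra.Repr k a (H × H)) :
    swl f a = ∑ i ∈ r.index, f (r.left i) • r.right i := by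
  rw [swl]
  simp only [LinearMap.comp_apply]
  rw [← r.eq]
  simp only [map_sum, LinearMap.rTensor_tmul, LinearEquiv.coe_coe, TensorProduct.lid_tmul]

lemma antipode_one : 𝐒 (1 : H) = 1 := by
  have h := HopfAlgebra.mul_antipode_rTensor_comul_apply (R := k) (1 : H)
  rw [Bialgebra.comul_one, Algebra.TensorProduct.one_def] at h
  simpa using h

lemma counit_S (u : H) :
    Coalgebra.counit (R := k) (𝐒 u) = Coalgebra.counit (R := k) u := by
  have r := Coalgebra.Repr.arbitrary k u
  have h := congrArg (Coalgebra.counit (R := k) (A := H)) (HopfAlgebra.sum_antipode_mul_eq_algebraMap_counit r)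
  rw [map_sum, Bialgebra.counit_algebraMap] at h
  calc Coalgebra.counit (R := k) (𝐒 u)
      = Coalgebra.counit (R := k) (𝐒 (∑ i ∈ r.index,
          Coalgebra.counit (R := k) (r.right i) • r.left i)) := by
        rw [sum_counit_right_smul r]
    _ = ∑ i ∈ r.index, Coalgebra.counit (R := k) (𝐒 (r.left i)) *
          Coalgebra.counit (R := k) (r.right i) := by
        rw [map_sum, map_sum]
        apply Finset.sum_congr rfl; intro i _
        rw [map_smul, map_smul, smul_eq_mul]
        ring
    _ = ∑ i ∈ r.index, Coalgebra.counit (R := k) (𝐒 (r.left i) * r.right i) := by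
        apply Finset.sum_congr rfl; intro i _
        rw [Bialgebra.counit_mul]
    _ = Coalgebra.counit (R := k) u := h

section Lam

variable (lam : H →ₗ[k] k)

lemma hlam_qmap
    (hlam : ∀ h : H,
      lam ((LinearMap.mul' k H)
        ((TensorProduct.map LinearMap.id (HopfAlgebra.antipode (R := k)))
          ((TensorProduct.comm k H H) (Coalgebra.comul (R := k) h)))) =
      Coalgebra.counit (R := k) h) :
    ∀ h : H, lam (qmap (k := k) h) = Coalgebra.counit (R := k) h := by
  intro h
  have h1 := hlam h
  rw [qmap, qq]
  simp only [LinearMap.comp_apply, LinearEquiv.coe_coe]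
  exact h1

lemma hlam_repr
    (hlam' : ∀ h : H, lam (qmap (k := k) h) = Coalgebra.counit (R := k) h)
    {u : H} (ρ : Coalgebra.Repr k u (H × H)) :
    ∑ j ∈ ρ.index, lam (ρ.right j * 𝐒 (ρ.left j)) = Coalgebra.counit (R := k) u := by
  rw [← hlam' u, qmap_repr ρ, map_sum]

lemma lam_one
    (hlam' : ∀ h : H, lam (qmap (k := k) h) = Coalgebra.counit (R := k) h) :
    lam 1 = 1 := by
  have h := hlam' 1
  rw [qmap] at h
  simp only [LinearMap.comp_apply] at h
  rw [Bialgebra.comul_one] at h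
  rw [Algebra.TensorProduct.one_def] at h
  rw [qq] at h
  simp only [LinearMap.comp_apply, LinearEquiv.coe_coe, TensorProduct.comm_tmul,
    TensorProduct.map_tmul, LinearMap.id_coe, id_eq, LinearMap.mul'_apply] at h
  rw [antipode_one, one_mul] at h
  simpa using h

lemma LS_repr
    (hlaml : ∀ h : H, swr lam h = lam h • (1 : H))
    {u : H} (ρ : Coalgebra.Repr k u (H × H)) :
    ∑ j ∈ ρ.index, lam (𝐒 (ρ.left j)) • 𝐒 (ρ.right j) = lam (𝐒 u) • (1 : H) := by
  have h := hlaml (𝐒 u)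
  rw [swr] at h
  simp only [LinearMap.comp_apply] at h
  rw [comulS_repr ρ] at h
  simpa only [map_sum, LinearMap.lTensor_tmul, LinearEquiv.coe_coe,
    TensorProduct.rid_tmul] using h

lemma swl_mu
    (hlaml : ∀ h : H, swr lam h = lam h • (1 : H)) :
    ∀ u : H, swl (lam ∘ₗ 𝐒) u = lam (𝐒 u) • (1 : H) := by
  intro a
  have r := Coalgebra.Repr.arbitrary k a
  have rl : (i : H × H) → Coalgebra.Repr k (r.left i) (H × H) := fun i => Coalgebra.Repr.arbitrary k _
  have rr : (i : H × H) → Coalgebra.Repr k (r.right i) (H × H) := fun i => Coalgebra.Repr.arbitrary k _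
  set G2 : H ⊗[k] (H ⊗[k] H) →ₗ[k] H :=
    (TensorProduct.lid k H).toLinearMap ∘ₗ
      (TensorProduct.map (lam ∘ₗ 𝐒) ((LinearMap.mul' k H) ∘ₗ (𝐒.rTensor H))) with hG2def
  have hG2 : ∀ x y z : H, G2 (x ⊗ₜ[k] (y ⊗ₜ[k] z)) = lam (𝐒 x) • (𝐒 y * z) := by
    intro x y z; simp [hG2def]
  have L : ∑ i ∈ r.index, ∑ j ∈ (rl i).index,
      G2 ((rl i).left j ⊗ₜ[k] ((rl i).right j ⊗ₜ[k] r.right i)) = swl (lam ∘ₗ 𝐒) a := by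
    rw [swl_repr (lam ∘ₗ 𝐒) r]
    apply Finset.sum_congr rfl; intro i _
    calc ∑ j ∈ (rl i).index, G2 ((rl i).left j ⊗ₜ[k] ((rl i).right j ⊗ₜ[k] r.right i))
        = ∑ j ∈ (rl i).index, (lam (𝐒 ((rl i).left j)) • 𝐒 ((rl i).right j)) * r.right i := by
          apply Finset.sum_congr rfl; intro j _
          rw [hG2, smul_mul_assoc]
      _ = (lam (𝐒 (r.left i)) • (1 : H)) * r.right i := by
          rw [← Finset.sum_mul, LS_repr lam hlaml (rl i)]
      _ = (lam ∘ₗ 𝐒) (r.left i) • r.right i := by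
          rw [smul_mul_assoc, one_mul]; rfl
  have R : ∑ i ∈ r.index, ∑ j ∈ (rr i).index,
      G2 (r.left i ⊗ₜ[k] ((rr i).left j ⊗ₜ[k] (rr i).right j)) = lam (𝐒 a) • (1 : H) := by
    calc ∑ i ∈ r.index, ∑ j ∈ (rr i).index,
        G2 (r.left i ⊗ₜ[k] ((rr i).left j ⊗ₜ[k] (rr i).right j))
        = ∑ i ∈ r.index, lam (𝐒 (r.left i)) •
            ((Coalgebra.counit (R := k) (r.right i)) • (1 : H)) := by
          apply Finset.sum_congr rfl; intro i _
          calc ∑ j ∈ (rr i).index, G2 (r.left i ⊗ₜ[k] ((rr i).left j ⊗ₜ[k] (rr i).right j))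
              = ∑ j ∈ (rr i).index,
                  lam (𝐒 (r.left i)) • (𝐒 ((rr i).left j) * (rr i).right j) := by
                apply Finset.sum_congr rfl; intro j _; rw [hG2]
            _ = lam (𝐒 (r.left i)) •
                  (∑ j ∈ (rr i).index, 𝐒 ((rr i).left j) * (rr i).right j) :=
                (Finset.smul_sum).symm
            _ = lam (𝐒 (r.left i)) •
                  ((Coalgebra.counit (R := k) (r.right i)) • (1 : H)) := by
                rw [HopfAlgebra.sum_antipode_mul_eq_smul (rr i)]
      _ = lam (𝐒 a) • (1 : H) := by
          calc ∑ i ∈ r.index, lam (𝐒 (r.left i)) •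
                ((Coalgebra.counit (R := k) (r.right i)) • (1 : H))
              = ∑ i ∈ r.index,
                  (lam (𝐒 (Coalgebra.counit (R := k) (r.right i) • r.left i))) • (1 : H) := by
                apply Finset.sum_congr rfl; intro i _
                rw [smul_smul, map_smul, map_smul, smul_eq_mul, mul_comm (lam (𝐒 (r.left i)))]
            _ = (lam (𝐒 (∑ i ∈ r.index,
                  Coalgebra.counit (R := k) (r.right i) • r.left i))) • (1 : H) := by
                rw [map_sum, map_sum, Finset.sum_smul]
            _ = lam (𝐒 a) • (1 : H) := by rw [sum_counit_right_smul r]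
  rw [← L, ex3G G2 r rl rr, R]

lemma lam_S
    (hlaml : ∀ h : H, swr lam h = lam h • (1 : H))
    (hlam' : ∀ h : H, lam (qmap (k := k) h) = Coalgebra.counit (R := k) h) :
    ∀ u : H, lam (𝐒 u) = lam u := by
  intro u
  have r := Coalgebra.Repr.arbitrary k u
  have l1 : lam (1 : H) = 1 := lam_one lam hlam'
  have e1 : ∑ i ∈ r.index, lam (r.right i) • lam (𝐒 (r.left i)) = lam u := by
    have h := congrArg (fun x : H => lam (𝐒 x)) (hlaml u)
    rw [swr_repr lam r] at h
    rw [map_sum, map_sum] at h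
    simp only [map_smul] at h
    rw [antipode_one, l1] at h
    simpa using h
  have e2 : ∑ i ∈ r.index, lam (𝐒 (r.left i)) • lam (r.right i) = lam (𝐒 u) := by
    have h := congrArg (fun x : H => lam x) (swl_mu lam hlaml u)
    rw [swl_repr (lam ∘ₗ 𝐒) r] at h
    rw [map_sum] at h
    simp only [map_smul, LinearMap.comp_apply] at h
    rw [l1] at h
    simpa using h
  rw [← e1, ← e2]
  apply Finset.sum_congr rfl; intro i _
  rw [smul_eq_mul, smul_eq_mul, mul_comm]

lemma swl_lam_qmap
    (hlam' : ∀ h : H, lam (qmap (k := k) h) = Coalgebra.counit (R := k) h) :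
    ∀ a : H, swl lam (qmap (k := k) a) = qmap (k := k) a := by
  intro a
  have r := Coalgebra.Repr.arbitrary k a
  have rl : (i : H × H) → Coalgebra.Repr k (r.left i) (H × H) := fun i => Coalgebra.Repr.arbitrary k _
  have rr : (i : H × H) → Coalgebra.Repr k (r.right i) (H × H) := fun i => Coalgebra.Repr.arbitrary k _
  have rx : (i : H × H) → (j : H × H) → Coalgebra.Repr k ((rl i).left j) (H × H) :=
    fun i j => Coalgebra.Repr.arbitrary k _
  have rm : (i : H × H) → (j : H × H) → Coalgebra.Repr k ((rl i).right j) (H × H) :=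
    fun i j => Coalgebra.Repr.arbitrary k _
  set W : H ⊗[k] H →ₗ[k] H :=
    (TensorProduct.lid k H).toLinearMap ∘ₗ (lam.rTensor H) with hWdef
  have hW : ∀ u v : H, W (u ⊗ₜ[k] v) = lam u • v := by
    intro u v; simp [hWdef]
  have hswl : ∀ u : H, swl lam u = W (Coalgebra.comul u) := by
    intro u; rfl
  set Psi5 : (H ⊗[k] H) ⊗[k] (H ⊗[k] H) →ₗ[k] H :=
    W ∘ₗ (TensorProduct.map (LinearMap.mul' k H) (LinearMap.mul' k H)) ∘ₗ
      (TensorProduct.map (TensorProduct.comm k H H).toLinearMap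
        (TensorProduct.comm k H H).toLinearMap) ∘ₗ
      (TensorProduct.tensorTensorTensorComm k H H H H).toLinearMap ∘ₗ
      (TensorProduct.map ((TensorProduct.map 𝐒 𝐒) ∘ₗ (TensorProduct.comm k H H).toLinearMap)
        LinearMap.id) with hPsi5def
  have hPsi5 : ∀ x y c d : H,
      Psi5 ((x ⊗ₜ[k] y) ⊗ₜ[k] (c ⊗ₜ[k] d)) = lam (c * 𝐒 y) • (d * 𝐒 x) := by
    intro x y c d
    simp [hPsi5def, TensorProduct.tensorTensorTensorComm_tmul, hW]
  set G5 : H ⊗[k] (H ⊗[k] H) →ₗ[k] H :=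
    Psi5 ∘ₗ ((Coalgebra.comul (R := k) (A := H)).rTensor (H ⊗[k] H)) with hG5def
  have hG5 : ∀ (u c d : H) (ρ : Coalgebra.Repr k u (H × H)),
      G5 (u ⊗ₜ[k] (c ⊗ₜ[k] d)) =
        ∑ j ∈ ρ.index, lam (c * 𝐒 (ρ.right j)) • (d * 𝐒 (ρ.left j)) := by
    intro u c d ρ
    rw [hG5def]
    simp only [LinearMap.comp_apply, LinearMap.rTensor_tmul]
    rw [← ρ.eq, TensorProduct.sum_tmul, map_sum]
    apply Finset.sum_congr rfl; intro j _
    rw [hPsi5]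
  calc swl lam (qmap (k := k) a)
      = ∑ i ∈ r.index, W (Coalgebra.comul (r.right i * 𝐒 (r.left i))) := by
        rw [qmap_repr r, map_sum]
        apply Finset.sum_congr rfl; intro i _
        rw [hswl]
    _ = ∑ i ∈ r.index, ∑ j ∈ (rr i).index, ∑ m ∈ (rl i).index,
        lam ((rr i).left j * 𝐒 ((rl i).right m)) • ((rr i).right j * 𝐒 ((rl i).left m)) := by
        apply Finset.sum_congr rfl; intro i _
        rw [Bialgebra.comul_mul, comulS_repr (rl i), ← (rr i).eq, Finset.sum_mul_sum]
        rw [map_sum]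
        apply Finset.sum_congr rfl; intro j _
        rw [map_sum]
        apply Finset.sum_congr rfl; intro m _
        rw [Algebra.TensorProduct.tmul_mul_tmul, hW]
    _ = ∑ i ∈ r.index, ∑ j ∈ (rr i).index,
        G5 (r.left i ⊗ₜ[k] ((rr i).left j ⊗ₜ[k] (rr i).right j)) := by
        apply Finset.sum_congr rfl; intro i _
        apply Finset.sum_congr rfl; intro j _
        rw [hG5 _ _ _ (rl i)]
    _ = ∑ i ∈ r.index, ∑ j ∈ (rl i).index,
        G5 ((rl i).left j ⊗ₜ[k] ((rl i).right j ⊗ₜ[k] r.right i)) := (ex3G G5 r rl rr).symm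
    _ = ∑ i ∈ r.index, ∑ j ∈ (rl i).index, ∑ m ∈ (rx i j).index,
        lam ((rl i).right j * 𝐒 ((rx i j).right m)) • (r.right i * 𝐒 ((rx i j).left m)) := by
        apply Finset.sum_congr rfl; intro i _
        apply Finset.sum_congr rfl; intro j _
        rw [hG5 _ _ _ (rx i j)]
    _ = ∑ i ∈ r.index, ∑ j ∈ (rl i).index, ∑ m ∈ (rm i j).index,
        lam ((rm i j).right m * 𝐒 ((rm i j).left m)) • (r.right i * 𝐒 ((rl i).left j)) := by
        apply Finset.sum_congr rfl; intro i _
        have hGi : ∀ p q s : H,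
            ((TensorProduct.rid k H).toLinearMap ∘ₗ
              (TensorProduct.map ((LinearMap.mulLeft k (r.right i)) ∘ₗ 𝐒) (lam ∘ₗ qq)))
              (p ⊗ₜ[k] (q ⊗ₜ[k] s)) = lam (s * 𝐒 q) • (r.right i * 𝐒 p) := by
          intro p q s
          simp [qq_tmul]
        have hex := ex3G ((TensorProduct.rid k H).toLinearMap ∘ₗ
              (TensorProduct.map ((LinearMap.mulLeft k (r.right i)) ∘ₗ 𝐒) (lam ∘ₗ qq)))
            (rl i) (rx i) (rm i)
        simpa only [hGi] using hex
    _ = ∑ i ∈ r.index, ∑ j ∈ (rl i).index,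
        (Coalgebra.counit (R := k) ((rl i).right j)) • (r.right i * 𝐒 ((rl i).left j)) := by
        apply Finset.sum_congr rfl; intro i _
        apply Finset.sum_congr rfl; intro j _
        rw [← Finset.sum_smul, hlam_repr lam hlam' (rm i j)]
    _ = ∑ i ∈ r.index, r.right i * 𝐒 (r.left i) := by
        apply Finset.sum_congr rfl; intro i _
        calc ∑ j ∈ (rl i).index,
            (Coalgebra.counit (R := k) ((rl i).right j)) • (r.right i * 𝐒 ((rl i).left j))
            = ∑ j ∈ (rl i).index,
              r.right i * 𝐒 ((Coalgebra.counit (R := k) ((rl i).right j)) • (rl i).left j) := by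
              apply Finset.sum_congr rfl; intro j _
              rw [map_smul, mul_smul_comm]
          _ = r.right i * 𝐒 (∑ j ∈ (rl i).index,
              (Coalgebra.counit (R := k) ((rl i).right j)) • (rl i).left j) := by
              rw [map_sum, Finset.mul_sum]
          _ = r.right i * 𝐒 (r.left i) := by rw [sum_counit_right_smul (rl i)]
    _ = qmap (k := k) a := (qmap_repr r).symm

lemma qmap_eq
    (hlaml : ∀ h : H, swr lam h = lam h • (1 : H))
    (hlam' : ∀ h : H, lam (qmap (k := k) h) = Coalgebra.counit (R := k) h) :
    ∀ a : H, qmap (k := k) a = (Coalgebra.counit (R := k) a) • (1 : H) := by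
  intro a
  have hls : (lam ∘ₗ 𝐒) = lam := LinearMap.ext (lam_S lam hlaml hlam')
  have h2 := swl_mu lam hlaml (qmap (k := k) a)
  rw [hls, swl_lam_qmap lam hlam' a, lam_S lam hlaml hlam' (qmap (k := k) a), hlam' a] at h2
  exact h2

lemma Fa
    (hlaml : ∀ h : H, swr lam h = lam h • (1 : H))
    (hlam' : ∀ h : H, lam (qmap (k := k) h) = Coalgebra.counit (R := k) h)
    {u : H} (ρ : Coalgebra.Repr k u (H × H)) :
    ∑ j ∈ ρ.index, 𝐒 (ρ.left j) * 𝐒 (𝐒 (ρ.right j)) =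
      (Coalgebra.counit (R := k) u) • (1 : H) := by
  have h2 : qmap (k := k) (𝐒 u) = ∑ j ∈ ρ.index, 𝐒 (ρ.left j) * 𝐒 (𝐒 (ρ.right j)) := by
    rw [qmap]
    simp only [LinearMap.comp_apply]
    rw [comulS_repr ρ]
    simp only [map_sum, qq_tmul]
  calc ∑ j ∈ ρ.index, 𝐒 (ρ.left j) * 𝐒 (𝐒 (ρ.right j))
      = qmap (k := k) (𝐒 u) := h2.symm
    _ = (Coalgebra.counit (R := k) (𝐒 u)) • (1 : H) := qmap_eq lam hlaml hlam' (𝐒 u)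
    _ = (Coalgebra.counit (R := k) u) • (1 : H) := by rw [counit_S]

lemma final
    (hlaml : ∀ h : H, swr lam h = lam h • (1 : H))
    (hlam' : ∀ h : H, lam (qmap (k := k) h) = Coalgebra.counit (R := k) h) :
    ∀ a : H, 𝐒 (𝐒 a) = a := by
  intro a
  have r := Coalgebra.Repr.arbitrary k a
  have rl : (i : H × H) → Coalgebra.Repr k (r.left i) (H × H) := fun i => Coalgebra.Repr.arbitrary k _
  have rr : (i : H × H) → Coalgebra.Repr k (r.right i) (H × H) := fun i => Coalgebra.Repr.arbitrary k _
  set G3 : H ⊗[k] (H ⊗[k] H) →ₗ[k] H :=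
    (LinearMap.mul' k H) ∘ₗ ((LinearMap.mul' k H).lTensor H) ∘ₗ
      (TensorProduct.map LinearMap.id (TensorProduct.map 𝐒 (𝐒 ∘ₗ 𝐒))) with hG3def
  have hG3 : ∀ x y z : H, G3 (x ⊗ₜ[k] (y ⊗ₜ[k] z)) = x * (𝐒 y * 𝐒 (𝐒 z)) := by
    intro x y z; simp [hG3def]
  have L : ∑ i ∈ r.index, ∑ j ∈ (rl i).index,
      G3 ((rl i).left j ⊗ₜ[k] ((rl i).right j ⊗ₜ[k] r.right i)) = 𝐒 (𝐒 a) := by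
    calc ∑ i ∈ r.index, ∑ j ∈ (rl i).index,
        G3 ((rl i).left j ⊗ₜ[k] ((rl i).right j ⊗ₜ[k] r.right i))
        = ∑ i ∈ r.index,
            (Coalgebra.counit (R := k) (r.left i)) • 𝐒 (𝐒 (r.right i)) := by
          apply Finset.sum_congr rfl; intro i _
          calc ∑ j ∈ (rl i).index,
              G3 ((rl i).left j ⊗ₜ[k] ((rl i).right j ⊗ₜ[k] r.right i))
              = ∑ j ∈ (rl i).index, ((rl i).left j * 𝐒 ((rl i).right j)) * 𝐒 (𝐒 (r.right i)) := by
                apply Finset.sum_congr rfl; intro j _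
                rw [hG3, mul_assoc]
            _ = ((Coalgebra.counit (R := k) (r.left i)) • (1 : H)) * 𝐒 (𝐒 (r.right i)) := by
                rw [← Finset.sum_mul, HopfAlgebra.sum_mul_antipode_eq_smul (rl i)]
            _ = (Coalgebra.counit (R := k) (r.left i)) • 𝐒 (𝐒 (r.right i)) := by
                rw [smul_mul_assoc, one_mul]
      _ = 𝐒 (𝐒 (∑ i ∈ r.index, (Coalgebra.counit (R := k) (r.left i)) • r.right i)) := by
          rw [map_sum, map_sum]
          apply Finset.sum_congr rfl; intro i _
          rw [map_smul, map_smul]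
      _ = 𝐒 (𝐒 a) := by rw [sum_counit_left_smul r]
  have R : ∑ i ∈ r.index, ∑ j ∈ (rr i).index,
      G3 (r.left i ⊗ₜ[k] ((rr i).left j ⊗ₜ[k] (rr i).right j)) = a := by
    calc ∑ i ∈ r.index, ∑ j ∈ (rr i).index,
        G3 (r.left i ⊗ₜ[k] ((rr i).left j ⊗ₜ[k] (rr i).right j))
        = ∑ i ∈ r.index, (Coalgebra.counit (R := k) (r.right i)) • r.left i := by
          apply Finset.sum_congr rfl; intro i _
          calc ∑ j ∈ (rr i).index,
              G3 (r.left i ⊗ₜ[k] ((rr i).left j ⊗ₜ[k] (rr i).right j))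
              = r.left i * (∑ j ∈ (rr i).index, 𝐒 ((rr i).left j) * 𝐒 (𝐒 ((rr i).right j))) := by
                rw [Finset.mul_sum]
                apply Finset.sum_congr rfl; intro j _
                rw [hG3]
            _ = r.left i * ((Coalgebra.counit (R := k) (r.right i)) • (1 : H)) := by
                rw [Fa lam hlaml hlam' (rr i)]
            _ = (Coalgebra.counit (R := k) (r.right i)) • r.left i := by
                rw [mul_smul_comm, mul_one]
      _ = a := sum_counit_right_smul r
  rw [← L, ex3G G3 r rl rr, R]

end Lam

end Stmt15

/-- `H` Hopf algebra over `k` with antipode `S`, and `λ` a left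
integral for `H` in `H⁎` with `λ(h₂·S(h₁)) = ε(h)` for all `h`.  Then `λ(1) = 1` and
`H` is involutory. -/
theorem statement15
    (lam : H →ₗ[k] k)
    (hlaml : ∀ h : H, swr lam h = lam h • (1 : H))
    (hlam : ∀ h : H,
      lam ((LinearMap.mul' k H)
        ((TensorProduct.map LinearMap.id (HopfAlgebra.antipode (R := k)))
          ((TensorProduct.comm k H H) (Coalgebra.comul (R := k) h)))) =
      Coalgebra.counit (R := k) h) :
    lam 1 = 1 ∧
      ∀ h : H, HopfAlgebra.antipode (R := k) (HopfAlgebra.antipode (R := k) h) = h := by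
  constructor
  · exact Stmt15.lam_one lam (Stmt15.hlam_qmap lam hlam)
  · exact Stmt15.final lam hlaml (Stmt15.hlam_qmap lam hlam)
end

section
/- Let H be a finite-dimensional Hopf algebra over a field k with S² = id_H and dim_k(H)·1 ≠ 0 in k (equivalently, H semisimple and cosemisimple). Let (e_i)_{i=1..n} be a k-basis of H with dual basis (eⁱ) of H⁎. Then the element t := Σᵢ eⁱ((e_i)₁)·(e_i)₂ of H equals Σᵢ eⁱ((e_i)₂)·(e_i)₁, is nonzero, is both a left and a right integral in H, and is cocommutative (t₁ ⊗ t₂ = t₂ ⊗ t₁). -/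
/-!
Helper definitions for Sweedler-notation expressions in a Hopf algebra `H` over a field `k`.
-/

open TensorProduct

variable {k H : Type*} [Field k] [Ring H] [HopfAlgebra k H]

set_option linter.unusedSectionVars false

section Aux

open Coalgebra HopfAlgebra

variable {k H : Type*} [Field k] [Ring H] [HopfAlgebra k H]

/-- scalar form of the right counit law -/
lemma repr_smul_counit {h : H} {Tr : Type*} (r : Coalgebra.Repr k h Tr) :
    ∑ j ∈ r.index, Coalgebra.counit (R := k) (r.right j) • r.left j = h := by
  have h2 := congrArg (TensorProduct.rid k H) (Coalgebra.sum_tmul_counit_eq r)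
  rw [map_sum] at h2
  simp only [TensorProduct.rid_tmul] at h2
  simpa using h2

/-- scalar form of the left counit law -/
lemma repr_counit_smul {h : H} {Tr : Type*} (r : Coalgebra.Repr k h Tr) :
    ∑ j ∈ r.index, Coalgebra.counit (R := k) (r.left j) • r.right j = h := by
  have h2 := congrArg (TensorProduct.lid k H) (Coalgebra.sum_counit_tmul_eq r)
  rw [map_sum] at h2
  simp only [TensorProduct.lid_tmul] at h2
  simpa using h2

/-- a representation of a product built from representations of the factors -/
noncomputable def reprMul {a c : H} {Tra : Type*} (ra : Coalgebra.Repr k a Tra) {Trc : Type*} (rc : Coalgebra.Repr k c Trc) :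
    Coalgebra.Repr k (a * c) (Tra × Trc) where
  index := ra.index ×ˢ rc.index
  left := fun p => ra.left p.1 * rc.left p.2
  right := fun p => ra.right p.1 * rc.right p.2
  eq := by
    rw [Bialgebra.comul_mul (R := k), ← ra.eq, ← rc.eq, Finset.sum_mul_sum]
    rw [Finset.sum_product]
    simp [Algebra.TensorProduct.tmul_mul_tmul]

@[simp] lemma reprMul_index {a c : H} {Tra : Type*} (ra : Coalgebra.Repr k a Tra) {Trc : Type*} (rc : Coalgebra.Repr k c Trc) :
    (reprMul ra rc).index = ra.index ×ˢ rc.index := rfl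

lemma swl_repr (f : H →ₗ[k] k) {x : H} {Tr : Type*} (r : Coalgebra.Repr k x Tr) :
    swl f x = ∑ j ∈ r.index, f (r.left j) • r.right j := by
  simp only [swl, LinearMap.comp_apply]
  rw [← r.eq]
  simp [map_sum]

lemma swr_repr (f : H →ₗ[k] k) {x : H} {Tr : Type*} (r : Coalgebra.Repr k x Tr) :
    swr f x = ∑ j ∈ r.index, f (r.right j) • r.left j := by
  simp only [swr, LinearMap.comp_apply]
  rw [← r.eq]
  simp [map_sum]

lemma apply_swl (f g : H →ₗ[k] k) (x : H) : f (swl g x) = g (swr f x) := by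
  rw [swl_repr g (ℛ k x), swr_repr f (ℛ k x)]
  simp [Finset.mul_sum, mul_comm]

lemma counit_swl (f : H →ₗ[k] k) (x : H) : Coalgebra.counit (R := k) (swl f x) = f x := by
  conv_rhs => rw [← repr_smul_counit (ℛ k x)]
  rw [swl_repr f (ℛ k x), map_sum, map_sum]
  simp [mul_comm]

lemma counit_swr (f : H →ₗ[k] k) (x : H) : Coalgebra.counit (R := k) (swr f x) = f x := by
  conv_rhs => rw [← repr_counit_smul (ℛ k x)]
  rw [swr_repr f (ℛ k x), map_sum, map_sum]
  simp [mul_comm]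


section Trace

variable {ι : Type*} [Fintype ι]

/-- trace of an endomorphism w.r.t. a basis -/
noncomputable def trB (b : Module.Basis ι k H) (F : H →ₗ[k] H) : k :=
  ∑ i, b.coord i (F (b i))

lemma trB_expand (b : Module.Basis ι k H) (A B : H →ₗ[k] H) :
    trB b (A ∘ₗ B) = ∑ i, ∑ j, b.coord j (B (b i)) * b.coord i (A (b j)) := by
  unfold trB
  refine Finset.sum_congr rfl fun i _ => ?_
  conv_lhs => rw [LinearMap.comp_apply, ← Module.Basis.sum_repr b (B (b i))]
  rw [map_sum, map_sum]
  refine Finset.sum_congr rfl fun j _ => ?_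
  rw [map_smul, map_smul]
  simp [Module.Basis.coord_apply, smul_eq_mul]

lemma trB_comm (b : Module.Basis ι k H) (A B : H →ₗ[k] H) :
    trB b (A ∘ₗ B) = trB b (B ∘ₗ A) := by
  rw [trB_expand, trB_expand, Finset.sum_comm]
  simp [mul_comm]

lemma trB_comp_mulLeft_sum (b : Module.Basis ι k H) (F : H →ₗ[k] H) {α : Type*} (s : Finset α)
    (c : α → H) :
    ∑ j ∈ s, trB b (F ∘ₗ LinearMap.mulLeft k (c j)) =
      trB b (F ∘ₗ LinearMap.mulLeft k (∑ j ∈ s, c j)) := by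
  unfold trB
  rw [Finset.sum_comm]
  refine Finset.sum_congr rfl fun i _ => ?_
  simp only [LinearMap.comp_apply, LinearMap.mulLeft_apply, Finset.sum_mul, map_sum]

lemma trB_comp_mulRight_sum (b : Module.Basis ι k H) (F : H →ₗ[k] H) {α : Type*} (s : Finset α)
    (c : α → H) :
    ∑ j ∈ s, trB b (F ∘ₗ LinearMap.mulRight k (c j)) =
      trB b (F ∘ₗ LinearMap.mulRight k (∑ j ∈ s, c j)) := by
  unfold trB
  rw [Finset.sum_comm]
  refine Finset.sum_congr rfl fun i _ => ?_
  simp only [LinearMap.comp_apply, LinearMap.mulRight_apply, Finset.mul_sum, map_sum]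

lemma trB_comp_mulLeft_unit (b : Module.Basis ι k H) (F : H →ₗ[k] H) (r : k) :
    trB b (F ∘ₗ LinearMap.mulLeft k (r • (1 : H))) = r * trB b F := by
  unfold trB
  rw [Finset.mul_sum]
  refine Finset.sum_congr rfl fun i _ => ?_
  simp [smul_mul_assoc, smul_eq_mul]

lemma trB_comp_mulRight_unit (b : Module.Basis ι k H) (F : H →ₗ[k] H) (r : k) :
    trB b (F ∘ₗ LinearMap.mulRight k (r • (1 : H))) = r * trB b F := by
  unfold trB
  rw [Finset.mul_sum]
  refine Finset.sum_congr rfl fun i _ => ?_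
  simp [mul_smul_comm, smul_eq_mul]

lemma apply_t (b : Module.Basis ι k H) (f : H →ₗ[k] k) :
    f (∑ i, swl (b.coord i) (b i)) = trB b (swr f) := by
  rw [map_sum]
  exact Finset.sum_congr rfl fun i _ => apply_swl f (b.coord i) (b i)

lemma apply_t' (b : Module.Basis ι k H) (f : H →ₗ[k] k) :
    f (∑ i, swr (b.coord i) (b i)) = trB b (swl f) := by
  rw [map_sum]
  refine Finset.sum_congr rfl fun i _ => ?_
  exact (apply_swl (b.coord i) f (b i)).symm

lemma counit_t (b : Module.Basis ι k H) :
    Coalgebra.counit (R := k) (∑ i, swl (b.coord i) (b i)) = (Fintype.card ι : k) := by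
  rw [map_sum]
  simp [counit_swl, Module.Basis.coord_apply]

lemma counit_t' (b : Module.Basis ι k H) :
    Coalgebra.counit (R := k) (∑ i, swr (b.coord i) (b i)) = (Fintype.card ι : k) := by
  rw [map_sum]
  simp [counit_swr, Module.Basis.coord_apply]

end Trace

section Antipode

/-- the trivial representation of `1` -/
noncomputable def reprOne : Coalgebra.Repr k (1 : H) ℕ where
  index := ({0} : Finset ℕ)
  left := fun _ => 1
  right := fun _ => 1
  eq := by simp [Bialgebra.comul_one, Algebra.TensorProduct.one_def]

lemma antipode_one : HopfAlgebra.antipode (R := k) (1 : H) = 1 := by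
  have h1 := HopfAlgebra.sum_antipode_mul_eq_smul (reprOne (k := k) (H := H))
  simpa [reprOne] using h1

/-- auxiliary trilinear gadget for the antimultiplicativity proof -/
noncomputable def PhiMap (p e f : H) : H ⊗[k] (H ⊗[k] H) →ₗ[k] H :=
  LinearMap.mul' k H ∘ₗ
    (TensorProduct.map
      (LinearMap.mulRight k (e * HopfAlgebra.antipode (R := k) f) ∘ₗ LinearMap.mul' k H ∘ₗ
        TensorProduct.map (HopfAlgebra.antipode (R := k) ∘ₗ LinearMap.mulRight k p)
          LinearMap.id)
      (HopfAlgebra.antipode (R := k))) ∘ₗ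
    (TensorProduct.assoc k H H H).symm.toLinearMap

@[simp] lemma PhiMap_tmul (p e f x y z : H) :
    PhiMap (k := k) p e f (x ⊗ₜ (y ⊗ₜ z)) =
      HopfAlgebra.antipode (R := k) (x * p) * y * e * HopfAlgebra.antipode (R := k) f *
        HopfAlgebra.antipode (R := k) z := by
  simp [PhiMap]

/-- auxiliary trilinear gadget for the antimultiplicativity proof, second form -/
noncomputable def PsiMap (g h' y : H) : H ⊗[k] (H ⊗[k] H) →ₗ[k] H :=
  LinearMap.mulRight k (HopfAlgebra.antipode (R := k) y) ∘ₗ LinearMap.mul' k H ∘ₗ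
    TensorProduct.map
      (LinearMap.mulRight k h' ∘ₗ HopfAlgebra.antipode (R := k) ∘ₗ LinearMap.mulLeft k g)
      LinearMap.id ∘ₗ
    LinearMap.lTensor H (LinearMap.mul' k H ∘ₗ
      (HopfAlgebra.antipode (R := k)).lTensor H)

@[simp] lemma PsiMap_tmul (g h' y p e f : H) :
    PsiMap (k := k) g h' y (p ⊗ₜ (e ⊗ₜ f)) =
      HopfAlgebra.antipode (R := k) (g * p) * h' * e * HopfAlgebra.antipode (R := k) f *
        HopfAlgebra.antipode (R := k) y := by
  simp [PsiMap, mul_assoc]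

local notation "σ" => HopfAlgebra.antipode (R := k) (A := H)
local notation "ε'" => Coalgebra.counit (R := k) (A := H)

lemma way1 {a c : H} {Tra : Type*} (ra : Coalgebra.Repr k a Tra)
    {Trra : Type*} (rra : (i : ra.ι) → Coalgebra.Repr k (ra.right i) Trra)
    {Trc : Type*} (rc : Coalgebra.Repr k c Trc)
    {Trrc : Type*} (rrc : (j : rc.ι) → Coalgebra.Repr k (rc.right j) Trrc) :
    ∑ j ∈ rc.index, ∑ n ∈ (rrc j).index, ∑ i ∈ ra.index, ∑ m ∈ (rra i).index,
      σ (ra.left i * rc.left j) * (rra i).left m * (rrc j).left n *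
        σ ((rrc j).right n) * σ ((rra i).right m)
    = σ (a * c) := by
  classical
  -- reorder sums to j i m n
  rw [show (∑ j ∈ rc.index, ∑ n ∈ (rrc j).index, ∑ i ∈ ra.index, ∑ m ∈ (rra i).index,
      σ (ra.left i * rc.left j) * (rra i).left m * (rrc j).left n *
        σ ((rrc j).right n) * σ ((rra i).right m))
      = ∑ j ∈ rc.index, ∑ i ∈ ra.index, ∑ m ∈ (rra i).index, ∑ n ∈ (rrc j).index,
      σ (ra.left i * rc.left j) * (rra i).left m * (rrc j).left n *
        σ ((rrc j).right n) * σ ((rra i).right m) from by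
    refine Finset.sum_congr rfl fun j _ => ?_
    rw [Finset.sum_comm]
    exact Finset.sum_congr rfl fun i _ => Finset.sum_comm]
  -- contract n
  have step1 : ∀ j ∈ rc.index, ∀ i ∈ ra.index, ∀ m ∈ (rra i).index,
      (∑ n ∈ (rrc j).index,
        σ (ra.left i * rc.left j) * (rra i).left m * (rrc j).left n *
          σ ((rrc j).right n) * σ ((rra i).right m))
      = ε' (rc.right j) •
          (σ (ra.left i * rc.left j) * (rra i).left m * σ ((rra i).right m)) := by
    intro j _ i _ m _
    have : ∀ n ∈ (rrc j).index,
        σ (ra.left i * rc.left j) * (rra i).left m * (rrc j).left n *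
          σ ((rrc j).right n) * σ ((rra i).right m)
        = (σ (ra.left i * rc.left j) * (rra i).left m *
            ((rrc j).left n * σ ((rrc j).right n))) * σ ((rra i).right m) := by
      intro n _; rw [mul_assoc (σ (ra.left i * rc.left j) * (rra i).left m)]
    rw [Finset.sum_congr rfl this, ← Finset.sum_mul, ← Finset.mul_sum,
      HopfAlgebra.sum_mul_antipode_eq_smul (rrc j)]
    rw [mul_smul_comm, mul_one, smul_mul_assoc]
  rw [Finset.sum_congr rfl fun j hj => Finset.sum_congr rfl fun i hi =>
    Finset.sum_congr rfl fun m hm => step1 j hj i hi m hm]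
  -- reorder to i m j
  rw [Finset.sum_comm]
  rw [Finset.sum_congr rfl fun i _ => Finset.sum_comm]
  -- contract j
  have step2 : ∀ i ∈ ra.index, ∀ m ∈ (rra i).index,
      (∑ j ∈ rc.index, ε' (rc.right j) •
        (σ (ra.left i * rc.left j) * (rra i).left m * σ ((rra i).right m)))
      = σ (ra.left i * c) * (rra i).left m * σ ((rra i).right m) := by
    intro i _ m _
    conv_rhs => rw [← repr_smul_counit rc, Finset.mul_sum, map_sum, Finset.sum_mul,
      Finset.sum_mul]
    refine Finset.sum_congr rfl fun j _ => ?_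
    rw [mul_smul_comm, map_smul, smul_mul_assoc, smul_mul_assoc]
  rw [Finset.sum_congr rfl fun i hi => Finset.sum_congr rfl fun m hm => step2 i hi m hm]
  -- contract m
  have step3 : ∀ i ∈ ra.index,
      (∑ m ∈ (rra i).index,
        σ (ra.left i * c) * (rra i).left m * σ ((rra i).right m))
      = ε' (ra.right i) • σ (ra.left i * c) := by
    intro i _
    have : ∀ m ∈ (rra i).index,
        σ (ra.left i * c) * (rra i).left m * σ ((rra i).right m)
        = σ (ra.left i * c) * ((rra i).left m * σ ((rra i).right m)) := by
      intro m _; rw [mul_assoc]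
    rw [Finset.sum_congr rfl this, ← Finset.mul_sum,
      HopfAlgebra.sum_mul_antipode_eq_smul (rra i), mul_smul_comm, mul_one]
  rw [Finset.sum_congr rfl step3]
  -- contract i
  conv_rhs => rw [← repr_smul_counit ra, Finset.sum_mul, map_sum]
  refine Finset.sum_congr rfl fun i _ => ?_
  rw [smul_mul_assoc, map_smul]

lemma way2 {a c : H} {Tra : Type*} (ra : Coalgebra.Repr k a Tra)
    {Trla : Type*} (rla : (i : ra.ι) → Coalgebra.Repr k (ra.left i) Trla)
    {Trra : Type*} (rra : (i : ra.ι) → Coalgebra.Repr k (ra.right i) Trra)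
    {Trc : Type*} (rc : Coalgebra.Repr k c Trc)
    {Trlc : Type*} (rlc : (j : rc.ι) → Coalgebra.Repr k (rc.left j) Trlc)
    {Trrc : Type*} (rrc : (j : rc.ι) → Coalgebra.Repr k (rc.right j) Trrc) :
    ∑ j ∈ rc.index, ∑ n ∈ (rrc j).index, ∑ i ∈ ra.index, ∑ m ∈ (rra i).index,
      σ (ra.left i * rc.left j) * (rra i).left m * (rrc j).left n *
        σ ((rrc j).right n) * σ ((rra i).right m)
    = σ c * σ a := by
  classical
  have bridge_a := Coalgebra.sum_tmul_tmul_eq ra rla rra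
  have bridge_c := Coalgebra.sum_tmul_tmul_eq rc rlc rrc
  -- step A : switch the nesting of a
  have stepA : ∀ j ∈ rc.index, ∀ n ∈ (rrc j).index,
      (∑ i ∈ ra.index, ∑ m ∈ (rra i).index,
        σ (ra.left i * rc.left j) * (rra i).left m * (rrc j).left n *
          σ ((rrc j).right n) * σ ((rra i).right m))
      = ∑ i ∈ ra.index, ∑ u ∈ (rla i).index,
        σ ((rla i).left u * rc.left j) * (rla i).right u * (rrc j).left n *
          σ ((rrc j).right n) * σ (ra.right i) := by
    intro j _ n _
    have h1 : (∑ i ∈ ra.index, ∑ m ∈ (rra i).index,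
        σ (ra.left i * rc.left j) * (rra i).left m * (rrc j).left n *
          σ ((rrc j).right n) * σ ((rra i).right m))
        = PhiMap (rc.left j) ((rrc j).left n) ((rrc j).right n)
            (∑ i ∈ ra.index, ∑ m ∈ (rra i).index,
              ra.left i ⊗ₜ[k] ((rra i).left m ⊗ₜ[k] (rra i).right m)) := by
      rw [map_sum]
      refine Finset.sum_congr rfl fun i _ => ?_
      rw [map_sum]
      exact Finset.sum_congr rfl fun m _ => (PhiMap_tmul _ _ _ _ _ _).symm
    rw [h1, ← bridge_a, map_sum]
    refine Finset.sum_congr rfl fun i _ => ?_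
    rw [map_sum]
    exact Finset.sum_congr rfl fun u _ => PhiMap_tmul _ _ _ _ _ _
  rw [Finset.sum_congr rfl fun j hj => Finset.sum_congr rfl fun n hn => stepA j hj n hn]
  -- reorder sums from j n i u to i u j n
  rw [show (∑ j ∈ rc.index, ∑ n ∈ (rrc j).index, ∑ i ∈ ra.index, ∑ u ∈ (rla i).index,
      σ ((rla i).left u * rc.left j) * (rla i).right u * (rrc j).left n *
        σ ((rrc j).right n) * σ (ra.right i))
      = ∑ i ∈ ra.index, ∑ u ∈ (rla i).index, ∑ j ∈ rc.index, ∑ n ∈ (rrc j).index,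
      σ ((rla i).left u * rc.left j) * (rla i).right u * (rrc j).left n *
        σ ((rrc j).right n) * σ (ra.right i) from by
    rw [Finset.sum_congr rfl fun j (_ : j ∈ rc.index) => Finset.sum_comm,
      Finset.sum_comm,
      Finset.sum_congr rfl fun i (_ : i ∈ ra.index) =>
        Finset.sum_congr rfl fun j (_ : j ∈ rc.index) => Finset.sum_comm,
      Finset.sum_congr rfl fun i (_ : i ∈ ra.index) => Finset.sum_comm]]
  -- step B : switch the nesting of c
  have stepB : ∀ i ∈ ra.index, ∀ u ∈ (rla i).index,
      (∑ j ∈ rc.index, ∑ n ∈ (rrc j).index,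
        σ ((rla i).left u * rc.left j) * (rla i).right u * (rrc j).left n *
          σ ((rrc j).right n) * σ (ra.right i))
      = ∑ j ∈ rc.index, ∑ v ∈ (rlc j).index,
        σ ((rla i).left u * (rlc j).left v) * (rla i).right u * (rlc j).right v *
          σ (rc.right j) * σ (ra.right i) := by
    intro i _ u _
    have h1 : (∑ j ∈ rc.index, ∑ n ∈ (rrc j).index,
        σ ((rla i).left u * rc.left j) * (rla i).right u * (rrc j).left n *
          σ ((rrc j).right n) * σ (ra.right i))
        = PsiMap ((rla i).left u) ((rla i).right u) (ra.right i)
            (∑ j ∈ rc.index, ∑ n ∈ (rrc j).index,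
              rc.left j ⊗ₜ[k] ((rrc j).left n ⊗ₜ[k] (rrc j).right n)) := by
      rw [map_sum]
      refine Finset.sum_congr rfl fun j _ => ?_
      rw [map_sum]
      exact Finset.sum_congr rfl fun n _ => (PsiMap_tmul _ _ _ _ _ _).symm
    rw [h1, ← bridge_c, map_sum]
    refine Finset.sum_congr rfl fun j _ => ?_
    rw [map_sum]
    exact Finset.sum_congr rfl fun v _ => PsiMap_tmul _ _ _ _ _ _
  rw [Finset.sum_congr rfl fun i hi => Finset.sum_congr rfl fun u hu => stepB i hi u hu]
  -- reorder u j to j u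
  rw [Finset.sum_congr rfl fun i (_ : i ∈ ra.index) => Finset.sum_comm]
  -- contract (u, v)
  have stepC : ∀ i ∈ ra.index, ∀ j ∈ rc.index,
      (∑ u ∈ (rla i).index, ∑ v ∈ (rlc j).index,
        σ ((rla i).left u * (rlc j).left v) * (rla i).right u * (rlc j).right v *
          σ (rc.right j) * σ (ra.right i))
      = (ε' (ra.left i) * ε' (rc.left j)) • (σ (rc.right j) * σ (ra.right i)) := by
    intro i _ j _
    have hterm : ∀ u ∈ (rla i).index, ∀ v ∈ (rlc j).index,
        σ ((rla i).left u * (rlc j).left v) * (rla i).right u * (rlc j).right v *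
          σ (rc.right j) * σ (ra.right i)
        = (σ ((rla i).left u * (rlc j).left v) * ((rla i).right u * (rlc j).right v)) *
            (σ (rc.right j) * σ (ra.right i)) := by
      intro u _ v _; simp [mul_assoc]
    rw [Finset.sum_congr rfl fun u hu => Finset.sum_congr rfl fun v hv => hterm u hu v hv]
    have hc := HopfAlgebra.sum_antipode_mul_eq_smul (reprMul (rla i) (rlc j))
    simp only [reprMul] at hc
    rw [Finset.sum_product] at hc
    calc (∑ u ∈ (rla i).index, ∑ v ∈ (rlc j).index,
          (σ ((rla i).left u * (rlc j).left v) * ((rla i).right u * (rlc j).right v)) *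
            (σ (rc.right j) * σ (ra.right i)))
        = (∑ u ∈ (rla i).index, ∑ v ∈ (rlc j).index,
            σ ((rla i).left u * (rlc j).left v) * ((rla i).right u * (rlc j).right v)) *
            (σ (rc.right j) * σ (ra.right i)) := by
          rw [Finset.sum_mul]
          exact Finset.sum_congr rfl fun u _ => by rw [Finset.sum_mul]
      _ = (ε' (ra.left i) * ε' (rc.left j)) • (σ (rc.right j) * σ (ra.right i)) := by
          rw [hc, ← Bialgebra.counit_mul, smul_mul_assoc, one_mul]
  rw [Finset.sum_congr rfl fun i hi => Finset.sum_congr rfl fun j hj => stepC i hi j hj]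
  -- final contraction
  rw [Finset.sum_comm]
  conv_rhs => rw [← repr_counit_smul rc, ← repr_counit_smul ra]
  rw [map_sum, map_sum, Finset.sum_mul]
  refine Finset.sum_congr rfl fun j _ => ?_
  rw [Finset.mul_sum]
  refine Finset.sum_congr rfl fun i _ => ?_
  simp [map_smul, smul_mul_assoc, mul_smul_comm, smul_smul, mul_comm]

lemma antipode_mul (a c : H) :
    HopfAlgebra.antipode (R := k) (a * c) =
      HopfAlgebra.antipode (R := k) c * HopfAlgebra.antipode (R := k) a := by
  classical
  rw [← way1 (ℛ k a) (fun i => ℛ k ((ℛ k a).right i)) (ℛ k c)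
      (fun j => ℛ k ((ℛ k c).right j)),
    way2 (ℛ k a) (fun i => ℛ k ((ℛ k a).left i)) (fun i => ℛ k ((ℛ k a).right i))
      (ℛ k c) (fun j => ℛ k ((ℛ k c).left j)) (fun j => ℛ k ((ℛ k c).right j))]

/-- `∑ h₂ ⬝ S h₁ = ε h` when `S² = id` -/
lemma sum_right_mul_antipode_left
    (hS2 : ∀ h : H, HopfAlgebra.antipode (R := k) (HopfAlgebra.antipode (R := k) h) = h)
    {h : H} {Tr : Type*} (r : Coalgebra.Repr k h Tr) :
    ∑ j ∈ r.index, r.right j * HopfAlgebra.antipode (R := k) (r.left j)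
      = Coalgebra.counit (R := k) h • (1 : H) := by
  have hterm : ∀ j ∈ r.index,
      r.right j * HopfAlgebra.antipode (R := k) (r.left j)
      = σ (r.left j * σ (r.right j)) := by
    intro j _
    rw [_root_.antipode_mul, hS2]
  rw [Finset.sum_congr rfl hterm, ← map_sum, HopfAlgebra.sum_mul_antipode_eq_smul r,
    map_smul, _root_.antipode_one]

/-- `∑ S h₂ ⬝ h₁ = ε h` when `S² = id` -/
lemma sum_antipode_right_mul_left
    (hS2 : ∀ h : H, HopfAlgebra.antipode (R := k) (HopfAlgebra.antipode (R := k) h) = h)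
    {h : H} {Tr : Type*} (r : Coalgebra.Repr k h Tr) :
    ∑ j ∈ r.index, HopfAlgebra.antipode (R := k) (r.right j) * r.left j
      = Coalgebra.counit (R := k) h • (1 : H) := by
  have hterm : ∀ j ∈ r.index,
      HopfAlgebra.antipode (R := k) (r.right j) * r.left j
      = σ (σ (r.left j) * r.right j) := by
    intro j _
    rw [_root_.antipode_mul, hS2]
  rw [Finset.sum_congr rfl hterm, ← map_sum, HopfAlgebra.sum_antipode_mul_eq_smul r,
    map_smul, _root_.antipode_one]

/-- `∑ S(h₁) h₂ ⊗ h₃ = 1 ⊗ h` -/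
lemma legT1 {h : H} {Tr : Type*} (r : Coalgebra.Repr k h Tr)
    {Trr : Type*} (rr : (j : r.ι) → Coalgebra.Repr k (r.right j) Trr) :
    ∑ j ∈ r.index, ∑ n ∈ (rr j).index,
      (σ (r.left j) * (rr j).left n) ⊗ₜ[k] (rr j).right n = (1 : H) ⊗ₜ[k] h := by
  classical
  have bridge := Coalgebra.sum_tmul_tmul_eq r (fun j => ℛ k (r.left j)) rr
  have happ := congrArg
    (LinearMap.rTensor H (LinearMap.mul' k H ∘ₗ
        (HopfAlgebra.antipode (R := k)).rTensor H) ∘ₗ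
      (TensorProduct.assoc k H H H).symm.toLinearMap) bridge
  simp only [map_sum, LinearMap.comp_apply, LinearEquiv.coe_coe,
    TensorProduct.assoc_symm_tmul, LinearMap.rTensor_tmul, LinearMap.mul'_apply] at happ
  rw [← happ]
  calc (∑ j ∈ r.index, ∑ u ∈ (ℛ k (r.left j)).index,
        (σ ((ℛ k (r.left j)).left u) * (ℛ k (r.left j)).right u) ⊗ₜ[k] r.right j)
      = ∑ j ∈ r.index, (1 : H) ⊗ₜ[k] (Coalgebra.counit (R := k) (r.left j) • r.right j) := by
        refine Finset.sum_congr rfl fun j _ => ?_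
        rw [← TensorProduct.sum_tmul, HopfAlgebra.sum_antipode_mul_eq_smul (ℛ k (r.left j)),
          TensorProduct.smul_tmul]
    _ = (1 : H) ⊗ₜ[k] h := by rw [← TensorProduct.tmul_sum, repr_counit_smul r]

/-- `∑ h₁ S(h₂) ⊗ h₃ = 1 ⊗ h` -/
lemma legT2aux {h : H} {Tr : Type*} (r : Coalgebra.Repr k h Tr)
    {Trr : Type*} (rr : (j : r.ι) → Coalgebra.Repr k (r.right j) Trr) :
    ∑ j ∈ r.index, ∑ n ∈ (rr j).index,
      (r.left j * σ ((rr j).left n)) ⊗ₜ[k] (rr j).right n = (1 : H) ⊗ₜ[k] h := by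
  classical
  have bridge := Coalgebra.sum_tmul_tmul_eq r (fun j => ℛ k (r.left j)) rr
  have happ := congrArg
    (LinearMap.rTensor H (LinearMap.mul' k H ∘ₗ
        (HopfAlgebra.antipode (R := k)).lTensor H) ∘ₗ
      (TensorProduct.assoc k H H H).symm.toLinearMap) bridge
  simp only [map_sum, LinearMap.comp_apply, LinearEquiv.coe_coe,
    TensorProduct.assoc_symm_tmul, LinearMap.rTensor_tmul, LinearMap.lTensor_tmul,
    LinearMap.mul'_apply] at happ
  rw [← happ]
  calc (∑ j ∈ r.index, ∑ u ∈ (ℛ k (r.left j)).index,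
        ((ℛ k (r.left j)).left u * σ ((ℛ k (r.left j)).right u)) ⊗ₜ[k] r.right j)
      = ∑ j ∈ r.index, (1 : H) ⊗ₜ[k] (Coalgebra.counit (R := k) (r.left j) • r.right j) := by
        refine Finset.sum_congr rfl fun j _ => ?_
        rw [← TensorProduct.sum_tmul, HopfAlgebra.sum_mul_antipode_eq_smul (ℛ k (r.left j)),
          TensorProduct.smul_tmul]
    _ = (1 : H) ⊗ₜ[k] h := by rw [← TensorProduct.tmul_sum, repr_counit_smul r]

/-- `∑ h₂ S(h₁) ⊗ h₃ = 1 ⊗ h` under `S² = id` -/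
lemma legT2
    (hS2 : ∀ h : H, HopfAlgebra.antipode (R := k) (HopfAlgebra.antipode (R := k) h) = h)
    {h : H} {Tr : Type*} (r : Coalgebra.Repr k h Tr)
    {Trr : Type*} (rr : (j : r.ι) → Coalgebra.Repr k (r.right j) Trr) :
    ∑ j ∈ r.index, ∑ n ∈ (rr j).index,
      ((rr j).left n * σ (r.left j)) ⊗ₜ[k] (rr j).right n = (1 : H) ⊗ₜ[k] h := by
  have happ := congrArg (LinearMap.rTensor H (HopfAlgebra.antipode (R := k)))
    (legT2aux r rr)
  simp only [map_sum, LinearMap.rTensor_tmul, _root_.antipode_one] at happ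
  rw [← happ]
  refine Finset.sum_congr rfl fun j _ => Finset.sum_congr rfl fun n _ => ?_
  rw [_root_.antipode_mul, hS2]

/-- `∑ h₁ ⊗ S(h₂) h₃ = h ⊗ 1` -/
lemma legT3aux {h : H} {Tr : Type*} (r : Coalgebra.Repr k h Tr)
    {Trl : Type*} (rl : (j : r.ι) → Coalgebra.Repr k (r.left j) Trl) :
    ∑ j ∈ r.index, ∑ u ∈ (rl j).index,
      (rl j).left u ⊗ₜ[k] (σ ((rl j).right u) * r.right j) = h ⊗ₜ[k] (1 : H) := by
  classical
  have bridge := Coalgebra.sum_tmul_tmul_eq r rl (fun j => ℛ k (r.right j))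
  have happ := congrArg
    (LinearMap.lTensor H (LinearMap.mul' k H ∘ₗ
        (HopfAlgebra.antipode (R := k)).rTensor H)) bridge
  simp only [map_sum, LinearMap.comp_apply, LinearMap.lTensor_tmul, LinearMap.rTensor_tmul,
    LinearMap.mul'_apply] at happ
  rw [happ]
  calc (∑ j ∈ r.index, ∑ n ∈ (ℛ k (r.right j)).index,
        r.left j ⊗ₜ[k] (σ ((ℛ k (r.right j)).left n) * (ℛ k (r.right j)).right n))
      = ∑ j ∈ r.index, (Coalgebra.counit (R := k) (r.right j) • r.left j) ⊗ₜ[k] (1 : H) := by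
        refine Finset.sum_congr rfl fun j _ => ?_
        rw [← TensorProduct.tmul_sum, HopfAlgebra.sum_antipode_mul_eq_smul (ℛ k (r.right j)),
          ← TensorProduct.smul_tmul]
    _ = h ⊗ₜ[k] (1 : H) := by rw [← TensorProduct.sum_tmul, repr_smul_counit r]

/-- `∑ h₁ ⊗ S(h₃) h₂ = h ⊗ 1` under `S² = id` -/
lemma legT3
    (hS2 : ∀ h : H, HopfAlgebra.antipode (R := k) (HopfAlgebra.antipode (R := k) h) = h)
    {h : H} {Tr : Type*} (r : Coalgebra.Repr k h Tr)
    {Trl : Type*} (rl : (j : r.ι) → Coalgebra.Repr k (r.left j) Trl) :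
    ∑ j ∈ r.index, ∑ u ∈ (rl j).index,
      (rl j).left u ⊗ₜ[k] (σ (r.right j) * (rl j).right u) = h ⊗ₜ[k] (1 : H) := by
  have happ := congrArg (LinearMap.lTensor H (HopfAlgebra.antipode (R := k)))
    (legT3aux r rl)
  simp only [map_sum, LinearMap.lTensor_tmul, _root_.antipode_one] at happ
  rw [← happ]
  refine Finset.sum_congr rfl fun j _ => Finset.sum_congr rfl fun u _ => ?_
  rw [_root_.antipode_mul, hS2]

/-- `∑ h₁ ⊗ h₂ S(h₃) = h ⊗ 1` -/
lemma legT4 {h : H} {Tr : Type*} (r : Coalgebra.Repr k h Tr)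
    {Trl : Type*} (rl : (j : r.ι) → Coalgebra.Repr k (r.left j) Trl) :
    ∑ j ∈ r.index, ∑ u ∈ (rl j).index,
      (rl j).left u ⊗ₜ[k] ((rl j).right u * σ (r.right j)) = h ⊗ₜ[k] (1 : H) := by
  classical
  have bridge := Coalgebra.sum_tmul_tmul_eq r rl (fun j => ℛ k (r.right j))
  have happ := congrArg
    (LinearMap.lTensor H (LinearMap.mul' k H ∘ₗ
        (HopfAlgebra.antipode (R := k)).lTensor H)) bridge
  simp only [map_sum, LinearMap.comp_apply, LinearMap.lTensor_tmul,
    LinearMap.mul'_apply] at happ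
  rw [happ]
  calc (∑ j ∈ r.index, ∑ n ∈ (ℛ k (r.right j)).index,
        r.left j ⊗ₜ[k] ((ℛ k (r.right j)).left n * σ ((ℛ k (r.right j)).right n)))
      = ∑ j ∈ r.index, (Coalgebra.counit (R := k) (r.right j) • r.left j) ⊗ₜ[k] (1 : H) := by
        refine Finset.sum_congr rfl fun j _ => ?_
        rw [← TensorProduct.tmul_sum, HopfAlgebra.sum_mul_antipode_eq_smul (ℛ k (r.right j)),
          ← TensorProduct.smul_tmul]
    _ = h ⊗ₜ[k] (1 : H) := by rw [← TensorProduct.sum_tmul, repr_smul_counit r]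

lemma KL1 (f : H →ₗ[k] k) {h : H} {Tr : Type*} (r : Coalgebra.Repr k h Tr) (x : H) :
    swr (f ∘ₗ LinearMap.mulLeft k h) x
      = ∑ j ∈ r.index, σ (r.left j) * swr f (r.right j * x) := by
  classical
  have hrhs : ∀ j ∈ r.index, σ (r.left j) * swr f (r.right j * x)
      = ∑ n ∈ (ℛ k (r.right j)).index, ∑ m ∈ (ℛ k x).index,
          f ((ℛ k (r.right j)).right n * (ℛ k x).right m) •
            (σ (r.left j) * ((ℛ k (r.right j)).left n * (ℛ k x).left m)) := by
    intro j _
    rw [swr_repr f (reprMul (ℛ k (r.right j)) (ℛ k x))]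
    simp only [reprMul]
    rw [Finset.sum_product, Finset.mul_sum]
    refine Finset.sum_congr rfl fun n _ => ?_
    rw [Finset.mul_sum]
    refine Finset.sum_congr rfl fun m _ => ?_
    rw [mul_smul_comm]
  rw [Finset.sum_congr rfl hrhs]
  rw [swr_repr (f ∘ₗ LinearMap.mulLeft k h) (ℛ k x)]
  simp only [LinearMap.comp_apply, LinearMap.mulLeft_apply]
  have key : ∀ m ∈ (ℛ k x).index,
      f (h * (ℛ k x).right m) • (ℛ k x).left m
      = ∑ j ∈ r.index, ∑ n ∈ (ℛ k (r.right j)).index,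
          f ((ℛ k (r.right j)).right n * (ℛ k x).right m) •
            (σ (r.left j) * ((ℛ k (r.right j)).left n * (ℛ k x).left m)) := by
    intro m _
    have happ := congrArg ((TensorProduct.rid k H).toLinearMap ∘ₗ
      TensorProduct.map (LinearMap.mulRight k ((ℛ k x).left m))
        (f ∘ₗ LinearMap.mulRight k ((ℛ k x).right m)))
      (legT1 r (fun j => ℛ k (r.right j)))
    simp only [map_sum, LinearMap.comp_apply, TensorProduct.map_tmul, LinearEquiv.coe_coe,
      TensorProduct.rid_tmul, LinearMap.mulRight_apply, one_mul] at happ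
    rw [← happ]
    refine Finset.sum_congr rfl fun j _ => Finset.sum_congr rfl fun n _ => ?_
    rw [mul_assoc]
  rw [Finset.sum_congr rfl key, Finset.sum_comm]
  exact Finset.sum_congr rfl fun j _ => Finset.sum_comm

lemma KL2 (hS2 : ∀ h : H, HopfAlgebra.antipode (R := k) (HopfAlgebra.antipode (R := k) h) = h)
    (f : H →ₗ[k] k) {h : H} {Tr : Type*} (r : Coalgebra.Repr k h Tr) (x : H) :
    swr (f ∘ₗ LinearMap.mulRight k h) x
      = ∑ j ∈ r.index, swr f (x * r.right j) * σ (r.left j) := by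
  classical
  have hrhs : ∀ j ∈ r.index, swr f (x * r.right j) * σ (r.left j)
      = ∑ m ∈ (ℛ k x).index, ∑ n ∈ (ℛ k (r.right j)).index,
          f ((ℛ k x).right m * (ℛ k (r.right j)).right n) •
            (((ℛ k x).left m * (ℛ k (r.right j)).left n) * σ (r.left j)) := by
    intro j _
    rw [swr_repr f (reprMul (ℛ k x) (ℛ k (r.right j)))]
    simp only [reprMul]
    rw [Finset.sum_product, Finset.sum_mul]
    refine Finset.sum_congr rfl fun m _ => ?_
    rw [Finset.sum_mul]
    refine Finset.sum_congr rfl fun n _ => ?_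
    rw [smul_mul_assoc]
  rw [Finset.sum_congr rfl hrhs]
  rw [swr_repr (f ∘ₗ LinearMap.mulRight k h) (ℛ k x)]
  simp only [LinearMap.comp_apply, LinearMap.mulRight_apply]
  have key : ∀ m ∈ (ℛ k x).index,
      f ((ℛ k x).right m * h) • (ℛ k x).left m
      = ∑ j ∈ r.index, ∑ n ∈ (ℛ k (r.right j)).index,
          f ((ℛ k x).right m * (ℛ k (r.right j)).right n) •
            (((ℛ k x).left m * (ℛ k (r.right j)).left n) * σ (r.left j)) := by
    intro m _
    have happ := congrArg ((TensorProduct.rid k H).toLinearMap ∘ₗ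
      TensorProduct.map (LinearMap.mulLeft k ((ℛ k x).left m))
        (f ∘ₗ LinearMap.mulLeft k ((ℛ k x).right m)))
      (legT2 hS2 r (fun j => ℛ k (r.right j)))
    simp only [map_sum, LinearMap.comp_apply, TensorProduct.map_tmul, LinearEquiv.coe_coe,
      TensorProduct.rid_tmul, LinearMap.mulLeft_apply, mul_one] at happ
    rw [← happ]
    refine Finset.sum_congr rfl fun j _ => Finset.sum_congr rfl fun n _ => ?_
    rw [mul_assoc]
  rw [Finset.sum_congr rfl key, Finset.sum_comm]

lemma KL3 (hS2 : ∀ h : H, HopfAlgebra.antipode (R := k) (HopfAlgebra.antipode (R := k) h) = h)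
    (f : H →ₗ[k] k) {h : H} {Tr : Type*} (r : Coalgebra.Repr k h Tr) (x : H) :
    swl (f ∘ₗ LinearMap.mulLeft k h) x
      = ∑ j ∈ r.index, σ (r.right j) * swl f (r.left j * x) := by
  classical
  have hrhs : ∀ j ∈ r.index, σ (r.right j) * swl f (r.left j * x)
      = ∑ u ∈ (ℛ k (r.left j)).index, ∑ m ∈ (ℛ k x).index,
          f ((ℛ k (r.left j)).left u * (ℛ k x).left m) •
            (σ (r.right j) * ((ℛ k (r.left j)).right u * (ℛ k x).right m)) := by
    intro j _
    rw [swl_repr f (reprMul (ℛ k (r.left j)) (ℛ k x))]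
    simp only [reprMul]
    rw [Finset.sum_product, Finset.mul_sum]
    refine Finset.sum_congr rfl fun u _ => ?_
    rw [Finset.mul_sum]
    refine Finset.sum_congr rfl fun m _ => ?_
    rw [mul_smul_comm]
  rw [Finset.sum_congr rfl hrhs]
  rw [swl_repr (f ∘ₗ LinearMap.mulLeft k h) (ℛ k x)]
  simp only [LinearMap.comp_apply, LinearMap.mulLeft_apply]
  have key : ∀ m ∈ (ℛ k x).index,
      f (h * (ℛ k x).left m) • (ℛ k x).right m
      = ∑ j ∈ r.index, ∑ u ∈ (ℛ k (r.left j)).index,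
          f ((ℛ k (r.left j)).left u * (ℛ k x).left m) •
            (σ (r.right j) * ((ℛ k (r.left j)).right u * (ℛ k x).right m)) := by
    intro m _
    have happ := congrArg ((TensorProduct.lid k H).toLinearMap ∘ₗ
      TensorProduct.map (f ∘ₗ LinearMap.mulRight k ((ℛ k x).left m))
        (LinearMap.mulRight k ((ℛ k x).right m)))
      (legT3 hS2 r (fun j => ℛ k (r.left j)))
    simp only [map_sum, LinearMap.comp_apply, TensorProduct.map_tmul, LinearEquiv.coe_coe,
      TensorProduct.lid_tmul, LinearMap.mulRight_apply, one_mul] at happ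
    rw [← happ]
    refine Finset.sum_congr rfl fun j _ => Finset.sum_congr rfl fun u _ => ?_
    rw [mul_assoc]
  rw [Finset.sum_congr rfl key, Finset.sum_comm]
  exact Finset.sum_congr rfl fun j _ => Finset.sum_comm

lemma KL4 (f : H →ₗ[k] k) {h : H} {Tr : Type*} (r : Coalgebra.Repr k h Tr) (x : H) :
    swl (f ∘ₗ LinearMap.mulRight k h) x
      = ∑ j ∈ r.index, swl f (x * r.left j) * σ (r.right j) := by
  classical
  have hrhs : ∀ j ∈ r.index, swl f (x * r.left j) * σ (r.right j)
      = ∑ m ∈ (ℛ k x).index, ∑ u ∈ (ℛ k (r.left j)).index,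
          f ((ℛ k x).left m * (ℛ k (r.left j)).left u) •
            (((ℛ k x).right m * (ℛ k (r.left j)).right u) * σ (r.right j)) := by
    intro j _
    rw [swl_repr f (reprMul (ℛ k x) (ℛ k (r.left j)))]
    simp only [reprMul]
    rw [Finset.sum_product, Finset.sum_mul]
    refine Finset.sum_congr rfl fun m _ => ?_
    rw [Finset.sum_mul]
    refine Finset.sum_congr rfl fun u _ => ?_
    rw [smul_mul_assoc]
  rw [Finset.sum_congr rfl hrhs]
  rw [swl_repr (f ∘ₗ LinearMap.mulRight k h) (ℛ k x)]
  simp only [LinearMap.comp_apply, LinearMap.mulRight_apply]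
  have key : ∀ m ∈ (ℛ k x).index,
      f ((ℛ k x).left m * h) • (ℛ k x).right m
      = ∑ j ∈ r.index, ∑ u ∈ (ℛ k (r.left j)).index,
          f ((ℛ k x).left m * (ℛ k (r.left j)).left u) •
            (((ℛ k x).right m * (ℛ k (r.left j)).right u) * σ (r.right j)) := by
    intro m _
    have happ := congrArg ((TensorProduct.lid k H).toLinearMap ∘ₗ
      TensorProduct.map (f ∘ₗ LinearMap.mulLeft k ((ℛ k x).left m))
        (LinearMap.mulLeft k ((ℛ k x).right m)))
      (legT4 r (fun j => ℛ k (r.left j)))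
    simp only [map_sum, LinearMap.comp_apply, TensorProduct.map_tmul, LinearEquiv.coe_coe,
      TensorProduct.lid_tmul, LinearMap.mulLeft_apply, mul_one] at happ
    rw [← happ]
    refine Finset.sum_congr rfl fun j _ => Finset.sum_congr rfl fun u _ => ?_
    rw [mul_assoc]
  rw [Finset.sum_congr rfl key, Finset.sum_comm]

section Integrals

variable {ι : Type*} [Fintype ι]

lemma trB_swr_mulLeft (b : Module.Basis ι k H)
    (hS2 : ∀ h : H, HopfAlgebra.antipode (R := k) (HopfAlgebra.antipode (R := k) h) = h)
    (f : H →ₗ[k] k) (h : H) :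
    trB b (swr (f ∘ₗ LinearMap.mulLeft k h))
      = Coalgebra.counit (R := k) h * trB b (swr f) := by
  classical
  set r := ℛ k h with hr
  calc trB b (swr (f ∘ₗ LinearMap.mulLeft k h))
      = ∑ j ∈ r.index, trB b (LinearMap.mulLeft k (σ (r.left j)) ∘ₗ
          (swr f ∘ₗ LinearMap.mulLeft k (r.right j))) := by
        unfold trB
        rw [Finset.sum_congr rfl fun i (_ : i ∈ (Finset.univ : Finset ι)) => by
          rw [KL1 f r (b i), map_sum], Finset.sum_comm]
        exact Finset.sum_congr rfl fun j _ => Finset.sum_congr rfl fun i _ => by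
          simp [LinearMap.comp_apply]
    _ = ∑ j ∈ r.index, trB b ((swr f ∘ₗ LinearMap.mulLeft k (r.right j)) ∘ₗ
          LinearMap.mulLeft k (σ (r.left j))) :=
        Finset.sum_congr rfl fun j _ => trB_comm b _ _
    _ = ∑ j ∈ r.index, trB b (swr f ∘ₗ
          LinearMap.mulLeft k (r.right j * σ (r.left j))) := by
        refine Finset.sum_congr rfl fun j _ => ?_
        rw [LinearMap.mulLeft_mul, LinearMap.comp_assoc]
    _ = trB b (swr f ∘ₗ LinearMap.mulLeft k (∑ j ∈ r.index, r.right j * σ (r.left j))) :=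
        trB_comp_mulLeft_sum b (swr f) r.index _
    _ = Coalgebra.counit (R := k) h * trB b (swr f) := by
        rw [sum_right_mul_antipode_left hS2 r, trB_comp_mulLeft_unit]

lemma trB_swr_mulRight (b : Module.Basis ι k H)
    (hS2 : ∀ h : H, HopfAlgebra.antipode (R := k) (HopfAlgebra.antipode (R := k) h) = h)
    (f : H →ₗ[k] k) (h : H) :
    trB b (swr (f ∘ₗ LinearMap.mulRight k h))
      = Coalgebra.counit (R := k) h * trB b (swr f) := by
  classical
  set r := ℛ k h with hr
  calc trB b (swr (f ∘ₗ LinearMap.mulRight k h))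
      = ∑ j ∈ r.index, trB b (LinearMap.mulRight k (σ (r.left j)) ∘ₗ
          (swr f ∘ₗ LinearMap.mulRight k (r.right j))) := by
        unfold trB
        rw [Finset.sum_congr rfl fun i (_ : i ∈ (Finset.univ : Finset ι)) => by
          rw [KL2 hS2 f r (b i), map_sum], Finset.sum_comm]
        exact Finset.sum_congr rfl fun j _ => Finset.sum_congr rfl fun i _ => by
          simp [LinearMap.comp_apply]
    _ = ∑ j ∈ r.index, trB b ((swr f ∘ₗ LinearMap.mulRight k (r.right j)) ∘ₗ
          LinearMap.mulRight k (σ (r.left j))) :=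
        Finset.sum_congr rfl fun j _ => trB_comm b _ _
    _ = ∑ j ∈ r.index, trB b (swr f ∘ₗ
          LinearMap.mulRight k (σ (r.left j) * r.right j)) := by
        refine Finset.sum_congr rfl fun j _ => ?_
        rw [LinearMap.mulRight_mul, LinearMap.comp_assoc]
    _ = trB b (swr f ∘ₗ LinearMap.mulRight k (∑ j ∈ r.index, σ (r.left j) * r.right j)) :=
        trB_comp_mulRight_sum b (swr f) r.index _
    _ = Coalgebra.counit (R := k) h * trB b (swr f) := by
        rw [HopfAlgebra.sum_antipode_mul_eq_smul r, trB_comp_mulRight_unit]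

lemma trB_swl_mulLeft (b : Module.Basis ι k H)
    (hS2 : ∀ h : H, HopfAlgebra.antipode (R := k) (HopfAlgebra.antipode (R := k) h) = h)
    (f : H →ₗ[k] k) (h : H) :
    trB b (swl (f ∘ₗ LinearMap.mulLeft k h))
      = Coalgebra.counit (R := k) h * trB b (swl f) := by
  classical
  set r := ℛ k h with hr
  calc trB b (swl (f ∘ₗ LinearMap.mulLeft k h))
      = ∑ j ∈ r.index, trB b (LinearMap.mulLeft k (σ (r.right j)) ∘ₗ
          (swl f ∘ₗ LinearMap.mulLeft k (r.left j))) := by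
        unfold trB
        rw [Finset.sum_congr rfl fun i (_ : i ∈ (Finset.univ : Finset ι)) => by
          rw [KL3 hS2 f r (b i), map_sum], Finset.sum_comm]
        exact Finset.sum_congr rfl fun j _ => Finset.sum_congr rfl fun i _ => by
          simp [LinearMap.comp_apply]
    _ = ∑ j ∈ r.index, trB b ((swl f ∘ₗ LinearMap.mulLeft k (r.left j)) ∘ₗ
          LinearMap.mulLeft k (σ (r.right j))) :=
        Finset.sum_congr rfl fun j _ => trB_comm b _ _
    _ = ∑ j ∈ r.index, trB b (swl f ∘ₗ
          LinearMap.mulLeft k (r.left j * σ (r.right j))) := by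
        refine Finset.sum_congr rfl fun j _ => ?_
        rw [LinearMap.mulLeft_mul, LinearMap.comp_assoc]
    _ = trB b (swl f ∘ₗ LinearMap.mulLeft k (∑ j ∈ r.index, r.left j * σ (r.right j))) :=
        trB_comp_mulLeft_sum b (swl f) r.index _
    _ = Coalgebra.counit (R := k) h * trB b (swl f) := by
        rw [HopfAlgebra.sum_mul_antipode_eq_smul r, trB_comp_mulLeft_unit]

lemma trB_swl_mulRight (b : Module.Basis ι k H)
    (hS2 : ∀ h : H, HopfAlgebra.antipode (R := k) (HopfAlgebra.antipode (R := k) h) = h)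
    (f : H →ₗ[k] k) (h : H) :
    trB b (swl (f ∘ₗ LinearMap.mulRight k h))
      = Coalgebra.counit (R := k) h * trB b (swl f) := by
  classical
  set r := ℛ k h with hr
  calc trB b (swl (f ∘ₗ LinearMap.mulRight k h))
      = ∑ j ∈ r.index, trB b (LinearMap.mulRight k (σ (r.right j)) ∘ₗ
          (swl f ∘ₗ LinearMap.mulRight k (r.left j))) := by
        unfold trB
        rw [Finset.sum_congr rfl fun i (_ : i ∈ (Finset.univ : Finset ι)) => by
          rw [KL4 f r (b i), map_sum], Finset.sum_comm]
        exact Finset.sum_congr rfl fun j _ => Finset.sum_congr rfl fun i _ => by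
          simp [LinearMap.comp_apply]
    _ = ∑ j ∈ r.index, trB b ((swl f ∘ₗ LinearMap.mulRight k (r.left j)) ∘ₗ
          LinearMap.mulRight k (σ (r.right j))) :=
        Finset.sum_congr rfl fun j _ => trB_comm b _ _
    _ = ∑ j ∈ r.index, trB b (swl f ∘ₗ
          LinearMap.mulRight k (σ (r.right j) * r.left j)) := by
        refine Finset.sum_congr rfl fun j _ => ?_
        rw [LinearMap.mulRight_mul, LinearMap.comp_assoc]
    _ = trB b (swl f ∘ₗ LinearMap.mulRight k (∑ j ∈ r.index, σ (r.right j) * r.left j)) :=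
        trB_comp_mulRight_sum b (swl f) r.index _
    _ = Coalgebra.counit (R := k) h * trB b (swl f) := by
        rw [sum_antipode_right_mul_left hS2 r, trB_comp_mulRight_unit]

end Integrals

section Cocomm

/-- pairing of two functionals against a tensor -/
noncomputable def pairF (f g : H →ₗ[k] k) : H ⊗[k] H →ₗ[k] k :=
  LinearMap.mul' k k ∘ₗ TensorProduct.map f g

@[simp] lemma pairF_tmul (f g : H →ₗ[k] k) (x y : H) :
    pairF f g (x ⊗ₜ y) = f x * g y := by simp [pairF]

lemma pairF_comm (f g : H →ₗ[k] k) (z : H ⊗[k] H) :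
    pairF f g (TensorProduct.comm k H H z) = pairF g f z := by
  have hmap : pairF f g ∘ₗ (TensorProduct.comm k H H).toLinearMap = pairF g f :=
    TensorProduct.ext' fun x y => by simp [mul_comm]
  exact congrArg (fun F : H ⊗[k] H →ₗ[k] k => F z) hmap

variable {ι : Type*} [Fintype ι]

lemma pairF_repr_eq (b : Module.Basis ι k H) (z : H ⊗[k] H) (i j : ι) :
    pairF (b.coord i) (b.coord j) z = (b.tensorProduct b).repr z (i, j) := by
  induction z using TensorProduct.induction_on with
  | zero => simp
  | tmul x y => simp [Module.Basis.tensorProduct_repr_tmul_apply, Module.Basis.coord_apply, mul_comm]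
  | add u v hu hv => simp [map_add, hu, hv]

lemma tensor_ext (b : Module.Basis ι k H) {z w : H ⊗[k] H}
    (hp : ∀ i j, pairF (b.coord i) (b.coord j) z = pairF (b.coord i) (b.coord j) w) :
    z = w := by
  apply (b.tensorProduct b).ext_elem
  rintro ⟨i, j⟩
  rw [← pairF_repr_eq, ← pairF_repr_eq]
  exact hp i j

lemma cocomKey (e f g : H →ₗ[k] k) (x : H) :
    pairF f g (Coalgebra.comul (R := k) (swl e x)) = e (swr f (swr g x)) := by
  classical
  set rx := ℛ k x with hrx
  have bridge := Coalgebra.sum_tmul_tmul_eq rx (fun j => ℛ k (rx.left j))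
    (fun j => ℛ k (rx.right j))
  have happ := congrArg (LinearMap.mul' k k ∘ₗ
    TensorProduct.map e (LinearMap.mul' k k ∘ₗ TensorProduct.map f g)) bridge
  simp only [map_sum, LinearMap.comp_apply, TensorProduct.map_tmul,
    LinearMap.mul'_apply] at happ
  -- LHS
  have hlhs : pairF f g (Coalgebra.comul (R := k) (swl e x))
      = ∑ j ∈ rx.index, ∑ n ∈ (ℛ k (rx.right j)).index,
          e (rx.left j) * (f ((ℛ k (rx.right j)).left n) * g ((ℛ k (rx.right j)).right n)) := by
    rw [swl_repr e rx, map_sum, map_sum]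
    refine Finset.sum_congr rfl fun j _ => ?_
    rw [map_smul, map_smul, ← (ℛ k (rx.right j)).eq, map_sum, Finset.smul_sum]
    refine Finset.sum_congr rfl fun n _ => ?_
    rw [pairF_tmul, smul_eq_mul]
  -- RHS
  have hrhs : e (swr f (swr g x))
      = ∑ j ∈ rx.index, ∑ u ∈ (ℛ k (rx.left j)).index,
          e ((ℛ k (rx.left j)).left u) *
            (f ((ℛ k (rx.left j)).right u) * g (rx.right j)) := by
    rw [swr_repr g rx, map_sum, map_sum]
    refine Finset.sum_congr rfl fun j _ => ?_
    rw [map_smul, map_smul, swr_repr f (ℛ k (rx.left j)), map_sum, Finset.smul_sum]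
    refine Finset.sum_congr rfl fun u _ => ?_
    rw [map_smul]
    simp only [smul_eq_mul]
    ring
  rw [hlhs, hrhs, ← happ]

lemma pairF_comul_t (b : Module.Basis ι k H) (f g : H →ₗ[k] k) :
    pairF f g (Coalgebra.comul (R := k) (∑ i, swl (b.coord i) (b i)))
      = trB b (swr f ∘ₗ swr g) := by
  rw [map_sum, map_sum]
  exact Finset.sum_congr rfl fun i _ => cocomKey (b.coord i) f g (b i)

lemma cocommutative (b : Module.Basis ι k H) :
    TensorProduct.comm k H H
        (Coalgebra.comul (R := k) (∑ i, swl (b.coord i) (b i)))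
      = Coalgebra.comul (R := k) (∑ i, swl (b.coord i) (b i)) := by
  apply tensor_ext b
  intro i j
  rw [pairF_comm, pairF_comul_t, pairF_comul_t]
  exact trB_comm b _ _

end Cocomm

end Antipode

end Aux


/-- `H` finite-dimensional Hopf algebra over `k` with `S² = id` and
`dim_k(H)·1 ≠ 0` in `k`.  For a basis `(eᵢ)` with dual basis `(eⁱ)`, the element
`t = Σᵢ eⁱ((eᵢ)₁)·(eᵢ)₂` equals `Σᵢ eⁱ((eᵢ)₂)·(eᵢ)₁`, is nonzero, is a two-sided
integral in `H`, and is cocommutative. -/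
theorem statement18 [FiniteDimensional k H]
    (hS2 : ∀ h : H, HopfAlgebra.antipode (R := k) (HopfAlgebra.antipode (R := k) h) = h)
    (hdim : (Module.finrank k H : k) ≠ 0)
    {ι : Type*} [Fintype ι] (b : Module.Basis ι k H)
    (t : H) (hT : t = ∑ i : ι, swl (b.coord i) (b i)) :
    t = (∑ i : ι, swr (b.coord i) (b i)) ∧
    t ≠ 0 ∧
    (∀ h : H, h * t = Coalgebra.counit (R := k) h • t) ∧
    (∀ h : H, t * h = Coalgebra.counit (R := k) h • t) ∧
    (TensorProduct.comm k H H) (Coalgebra.comul (R := k) t) = Coalgebra.comul (R := k) t := by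
  classical
  subst hT
  have hcard : Coalgebra.counit (R := k) (∑ i : ι, swl (b.coord i) (b i))
      = (Module.finrank k H : k) := by
    rw [counit_t b, Module.finrank_eq_card_basis b]
  have hcard' : Coalgebra.counit (R := k) (∑ i : ι, swr (b.coord i) (b i))
      = (Module.finrank k H : k) := by
    rw [counit_t' b, Module.finrank_eq_card_basis b]
  -- left integral property of t
  have hL : ∀ h : H, h * (∑ i : ι, swl (b.coord i) (b i))
      = Coalgebra.counit (R := k) h • (∑ i : ι, swl (b.coord i) (b i)) := by
    intro h
    apply b.ext_elem
    intro i
    simp only [← Module.Basis.coord_apply]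
    have l1 := apply_t b (b.coord i ∘ₗ LinearMap.mulLeft k h)
    simp only [LinearMap.comp_apply, LinearMap.mulLeft_apply] at l1
    rw [l1, trB_swr_mulLeft b hS2, ← apply_t b (b.coord i), map_smul, smul_eq_mul]
  -- right integral property of t
  have hR : ∀ h : H, (∑ i : ι, swl (b.coord i) (b i)) * h
      = Coalgebra.counit (R := k) h • (∑ i : ι, swl (b.coord i) (b i)) := by
    intro h
    apply b.ext_elem
    intro i
    simp only [← Module.Basis.coord_apply]
    have l1 := apply_t b (b.coord i ∘ₗ LinearMap.mulRight k h)
    simp only [LinearMap.comp_apply, LinearMap.mulRight_apply] at l1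
    rw [l1, trB_swr_mulRight b hS2, ← apply_t b (b.coord i), map_smul, smul_eq_mul]
  -- left integral property of t'
  have hL' : ∀ h : H, h * (∑ i : ι, swr (b.coord i) (b i))
      = Coalgebra.counit (R := k) h • (∑ i : ι, swr (b.coord i) (b i)) := by
    intro h
    apply b.ext_elem
    intro i
    simp only [← Module.Basis.coord_apply]
    have l1 := apply_t' b (b.coord i ∘ₗ LinearMap.mulLeft k h)
    simp only [LinearMap.comp_apply, LinearMap.mulLeft_apply] at l1
    rw [l1, trB_swl_mulLeft b hS2, ← apply_t' b (b.coord i), map_smul, smul_eq_mul]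
  -- t is nonzero
  have tne : (∑ i : ι, swl (b.coord i) (b i)) ≠ 0 := by
    intro h0
    rw [h0, map_zero] at hcard
    exact hdim hcard.symm
  -- t = t'
  have t_eq : (∑ i : ι, swl (b.coord i) (b i)) = ∑ i : ι, swr (b.coord i) (b i) := by
    have h1 := hR (∑ i : ι, swr (b.coord i) (b i))
    have h2 := hL' (∑ i : ι, swl (b.coord i) (b i))
    rw [hcard'] at h1
    rw [hcard] at h2
    have h3 : (Module.finrank k H : k) • (∑ i : ι, swl (b.coord i) (b i))
        = (Module.finrank k H : k) • (∑ i : ι, swr (b.coord i) (b i)) := by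
      rw [← h1, h2]
    rw [← inv_smul_smul₀ hdim (∑ i : ι, swl (b.coord i) (b i)), h3, inv_smul_smul₀ hdim]
  exact ⟨t_eq, tne, hL, hR, cocommutative b⟩
end

section
/- Let H be a finite-dimensional Hopf algebra over a field k with S² = id_H and dim_k(H)·1 ≠ 0 in k (equivalently, H semisimple and cosemisimple). Let (e_i)_{i=1..n} be a k-basis of H with dual basis (eⁱ) of H⁎. Then the linear functional λ : H → k defined by λ(x) := Σᵢ eⁱ(x·e_i) equals x ↦ Σᵢ eⁱ(e_i·x), is nonzero, is both a left integral (h₁·λ(h₂) = λ(h)·1 for all h) and a right integral (λ(h₁)·h₂ = λ(h)·1 for all h) for H in H⁎, and is cocommutative (λ(x·y) = λ(y·x) for all x, y ∈ H). -/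
set_option maxHeartbeats 1000000
set_option synthInstance.maxHeartbeats 400000
set_option linter.unusedSectionVars false


/-!
Helper definitions for Sweedler-notation expressions in a Hopf algebra `H` over a field `k`.
-/

open TensorProduct Coalgebra LinearMap

variable {k H : Type*} [Field k] [Ring H] [HopfAlgebra k H]

local notation "ε" => Coalgebra.counit (R := k)
local notation "𝑺" => HopfAlgebra.antipode (R := k)
local notation "μ" => LinearMap.mul' k H

variable (k) in
noncomputable def rA (k : Type*) {H : Type*} [Field k] [Ring H] [HopfAlgebra k H] (x : H) : Coalgebra.Repr k x (H × H) := Coalgebra.Repr.arbitrary k x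

noncomputable def mulRepr {x y : H} {ι₁ ι₂ : Type*} (r1 : Coalgebra.Repr k x ι₁)
    (r2 : Coalgebra.Repr k y ι₂) :
    Coalgebra.Repr k (x * y) (ι₁ × ι₂) where
  index := r1.index ×ˢ r2.index
  left := fun p => r1.left p.1 * r2.left p.2
  right := fun p => r1.right p.1 * r2.right p.2
  eq := by
    rw [Bialgebra.comul_mul, ← r1.eq, ← r2.eq, Finset.sum_mul_sum]
    rw [Finset.sum_product]
    simp [Algebra.TensorProduct.tmul_mul_tmul]

lemma counit_collapse {c : H} {ιr : Type*} (r : Coalgebra.Repr k c ιr) :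
    ∑ i ∈ r.index, ε (r.left i) • r.right i = c := by
  have h := Coalgebra.sum_counit_tmul_eq (R := k) r
  apply_fun (TensorProduct.lid k H) at h
  simpa only [map_sum, TensorProduct.lid_tmul, one_smul] using h

lemma counit_collapse' {c : H} {ιr : Type*} (r : Coalgebra.Repr k c ιr) :
    ∑ i ∈ r.index, ε (r.right i) • r.left i = c := by
  have h := Coalgebra.sum_tmul_counit_eq (R := k) r
  apply_fun (TensorProduct.rid k H) at h
  simpa only [map_sum, TensorProduct.rid_tmul, one_smul] using h

lemma S_one : 𝑺 (1 : H) = 1 := by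
  have h := HopfAlgebra.mul_antipode_rTensor_comul_apply (R := k) (A := H) 1
  simpa [Algebra.TensorProduct.one_def] using h

lemma gen1 (c C : H) (F : H →ₗ[k] H) :
    ∑ i ∈ (rA k c).index, ∑ t ∈ (rA k ((rA k c).left i)).index,
      F ((rA k ((rA k c).left i)).left t) *
        ((rA k ((rA k c).left i)).right t * (𝑺 ((rA k c).right i) * C))
    = F c * C := by
  have sw := Coalgebra.sum_map_tmul_tmul_eq (R := k)
      F (LinearMap.id (R := k) (M := H)) (HopfAlgebra.antipode (R := k)) c
      (repr := rA k c) (a₁ := fun i => rA k ((rA k c).left i)) (a₂ := fun i => rA k ((rA k c).right i))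
  apply_fun (μ ∘ₗ lTensor H (μ ∘ₗ lTensor H (mulRight k C))) at sw
  simp only [map_sum, LinearMap.comp_apply, lTensor_tmul, mul'_apply, mulRight_apply,
    LinearMap.id_coe, id_eq] at sw
  rw [← sw]
  have inner : ∀ i ∈ (rA k c).index,
      ∑ j ∈ (rA k ((rA k c).right i)).index,
        F ((rA k c).left i) * ((rA k ((rA k c).right i)).left j *
          (𝑺 ((rA k ((rA k c).right i)).right j) * C))
      = ε ((rA k c).right i) • (F ((rA k c).left i) * C) := by
    intro i _
    have hc := HopfAlgebra.sum_mul_antipode_eq_smul (rA k ((rA k c).right i))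
    calc ∑ j ∈ (rA k ((rA k c).right i)).index,
          F ((rA k c).left i) * ((rA k ((rA k c).right i)).left j *
            (𝑺 ((rA k ((rA k c).right i)).right j) * C))
        = F ((rA k c).left i) * ((∑ j ∈ (rA k ((rA k c).right i)).index,
            (rA k ((rA k c).right i)).left j * 𝑺 ((rA k ((rA k c).right i)).right j)) * C) := by
          rw [Finset.sum_mul, Finset.mul_sum]
          exact Finset.sum_congr rfl fun j _ => by rw [mul_assoc]
      _ = ε ((rA k c).right i) • (F ((rA k c).left i) * C) := by
          rw [hc, smul_mul_assoc, one_mul, mul_smul_comm]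
  rw [Finset.sum_congr rfl inner]
  calc ∑ i ∈ (rA k c).index, ε ((rA k c).right i) • (F ((rA k c).left i) * C)
      = (∑ i ∈ (rA k c).index, ε ((rA k c).right i) • F ((rA k c).left i)) * C := by
        rw [Finset.sum_mul]
        exact Finset.sum_congr rfl fun i _ => (smul_mul_assoc _ _ _).symm
    _ = F c * C := by
        have : ∑ i ∈ (rA k c).index, ε ((rA k c).right i) • F ((rA k c).left i)
            = F (∑ i ∈ (rA k c).index, ε ((rA k c).right i) • (rA k c).left i) := by
          rw [map_sum]
          exact Finset.sum_congr rfl fun i _ => (map_smul F _ _).symm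
        rw [this, counit_collapse' (rA k c)]

lemma S_mul (a b : H) : 𝑺 (a * b) = 𝑺 b * 𝑺 a := by
  symm
  have hSa : 𝑺 a = ∑ i ∈ (rA k a).index, ε ((rA k a).left i) • 𝑺 ((rA k a).right i) := by
    conv_lhs => rw [← counit_collapse (rA k a)]
    rw [map_sum]
    exact Finset.sum_congr rfl fun i _ => by rw [map_smul]
  have hSb : 𝑺 b = ∑ j ∈ (rA k b).index, ε ((rA k b).left j) • 𝑺 ((rA k b).right j) := by
    conv_lhs => rw [← counit_collapse (rA k b)]
    rw [map_sum]
    exact Finset.sum_congr rfl fun j _ => by rw [map_smul]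
  calc 𝑺 b * 𝑺 a
      = ∑ i ∈ (rA k a).index, ∑ j ∈ (rA k b).index,
          (ε ((rA k a).left i) * ε ((rA k b).left j)) •
            (𝑺 ((rA k b).right j) * 𝑺 ((rA k a).right i)) := by
        rw [hSa, hSb, Finset.sum_mul_sum, Finset.sum_comm]
        refine Finset.sum_congr rfl fun i _ => Finset.sum_congr rfl fun j _ => ?_
        rw [smul_mul_assoc, mul_smul_comm, smul_smul, mul_comm (ε ((rA k b).left j))]
    _ = ∑ i ∈ (rA k a).index, ∑ j ∈ (rA k b).index,
          ∑ s ∈ (rA k ((rA k a).left i)).index, ∑ t ∈ (rA k ((rA k b).left j)).index,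
          (𝑺 ((rA k ((rA k a).left i)).left s * (rA k ((rA k b).left j)).left t) *
            ((rA k ((rA k a).left i)).right s * (rA k ((rA k b).left j)).right t)) *
            (𝑺 ((rA k b).right j) * 𝑺 ((rA k a).right i)) := by
        refine Finset.sum_congr rfl fun i _ => Finset.sum_congr rfl fun j _ => ?_
        rw [← Bialgebra.counit_mul (R := k) ((rA k a).left i) ((rA k b).left j)]
        rw [show (ε ((rA k a).left i * (rA k b).left j)) •
              (𝑺 ((rA k b).right j) * 𝑺 ((rA k a).right i))
            = ((ε ((rA k a).left i * (rA k b).left j)) • (1 : H)) *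
              (𝑺 ((rA k b).right j) * 𝑺 ((rA k a).right i)) from by
          rw [smul_mul_assoc, one_mul]]
        rw [← HopfAlgebra.sum_antipode_mul_eq_smul
          (mulRepr (rA k ((rA k a).left i)) (rA k ((rA k b).left j)))]
        rw [Finset.sum_mul]
        show ∑ p ∈ (rA k ((rA k a).left i)).index ×ˢ (rA k ((rA k b).left j)).index, _ = _
        rw [Finset.sum_product]
        rfl
    _ = ∑ i ∈ (rA k a).index, ∑ s ∈ (rA k ((rA k a).left i)).index,
          (𝑺 ((rA k ((rA k a).left i)).left s * b) * (rA k ((rA k a).left i)).right s) *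
            𝑺 ((rA k a).right i) := by
        refine Finset.sum_congr rfl fun i _ => ?_
        rw [Finset.sum_comm]
        refine Finset.sum_congr rfl fun s _ => ?_
        have g1 := gen1 (k := k) b (𝑺 ((rA k a).right i))
          ((mulRight k ((rA k ((rA k a).left i)).right s)) ∘ₗ
            HopfAlgebra.antipode (R := k) ∘ₗ (mulLeft k ((rA k ((rA k a).left i)).left s)))
        simp only [LinearMap.comp_apply, mulRight_apply, mulLeft_apply] at g1
        rw [← g1]
        refine Finset.sum_congr rfl fun j _ => Finset.sum_congr rfl fun t _ => ?_
        simp only [mul_assoc]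
    _ = 𝑺 (a * b) := by
        have g2 := gen1 (k := k) a (1 : H)
          (HopfAlgebra.antipode (R := k) ∘ₗ (mulRight k b))
        simp only [LinearMap.comp_apply, mulRight_apply, mul_one] at g2
        rw [← g2]
        refine Finset.sum_congr rfl fun i _ => Finset.sum_congr rfl fun s _ => ?_
        rw [mul_assoc]

lemma op_r (hS2 : ∀ h : H, 𝑺 (𝑺 h) = h) {c : H} {ιr : Type*} (r : Coalgebra.Repr k c ιr) :
    ∑ i ∈ r.index, r.right i * 𝑺 (r.left i) = ε c • (1 : H) := by
  have h := HopfAlgebra.sum_mul_antipode_eq_smul r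
  apply_fun (HopfAlgebra.antipode (R := k)) at h
  simpa only [map_sum, map_smul, S_mul, S_one, hS2] using h

lemma op_l (hS2 : ∀ h : H, 𝑺 (𝑺 h) = h) {c : H} {ιr : Type*} (r : Coalgebra.Repr k c ιr) :
    ∑ i ∈ r.index, 𝑺 (r.right i) * r.left i = ε c • (1 : H) := by
  have h := HopfAlgebra.sum_antipode_mul_eq_smul r
  apply_fun (HopfAlgebra.antipode (R := k)) at h
  simpa only [map_sum, map_smul, S_mul, S_one, hS2] using h

/-- `Φ : x ⊗ y ↦ x₁ ⊗ S(x₂) y`. -/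
noncomputable def PhiS : H ⊗[k] H →ₗ[k] H ⊗[k] H :=
  lTensor H μ ∘ₗ (TensorProduct.assoc k H H H).toLinearMap ∘ₗ
    rTensor H (lTensor H (HopfAlgebra.antipode (R := k))) ∘ₗ
      rTensor H (Coalgebra.comul (R := k))

/-- `Φ' : x ⊗ y ↦ x₁ ⊗ x₂ y`. -/
noncomputable def PhiP : H ⊗[k] H →ₗ[k] H ⊗[k] H :=
  lTensor H μ ∘ₗ (TensorProduct.assoc k H H H).toLinearMap ∘ₗ
    rTensor H (Coalgebra.comul (R := k))

/-- `Ψ : x ⊗ y ↦ x S(y₁) ⊗ y₂`. -/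
noncomputable def PsiS : H ⊗[k] H →ₗ[k] H ⊗[k] H :=
  rTensor H μ ∘ₗ (TensorProduct.assoc k H H H).symm.toLinearMap ∘ₗ
    lTensor H (rTensor H (HopfAlgebra.antipode (R := k))) ∘ₗ
      lTensor H (Coalgebra.comul (R := k))

/-- `Ψ' : x ⊗ y ↦ x y₁ ⊗ y₂`. -/
noncomputable def PsiP : H ⊗[k] H →ₗ[k] H ⊗[k] H :=
  rTensor H μ ∘ₗ (TensorProduct.assoc k H H H).symm.toLinearMap ∘ₗ
    lTensor H (Coalgebra.comul (R := k))

lemma PhiS_apply (x y : H) {ιr : Type*} (r : Coalgebra.Repr k x ιr) :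
    PhiS (x ⊗ₜ[k] y) = ∑ i ∈ r.index, r.left i ⊗ₜ[k] (𝑺 (r.right i) * y) := by
  simp only [PhiS, LinearMap.comp_apply, rTensor_tmul]
  rw [← r.eq]
  simp only [map_sum, TensorProduct.sum_tmul, rTensor_tmul, lTensor_tmul,
    LinearEquiv.coe_coe, TensorProduct.assoc_tmul, mul'_apply]

lemma PhiP_apply (x y : H) {ιr : Type*} (r : Coalgebra.Repr k x ιr) :
    PhiP (x ⊗ₜ[k] y) = ∑ i ∈ r.index, r.left i ⊗ₜ[k] (r.right i * y) := by
  simp only [PhiP, LinearMap.comp_apply, rTensor_tmul]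
  rw [← r.eq]
  simp only [map_sum, TensorProduct.sum_tmul, rTensor_tmul, lTensor_tmul,
    LinearEquiv.coe_coe, TensorProduct.assoc_tmul, mul'_apply]

lemma PsiS_apply (x y : H) {ιr : Type*} (r : Coalgebra.Repr k y ιr) :
    PsiS (x ⊗ₜ[k] y) = ∑ i ∈ r.index, (x * 𝑺 (r.left i)) ⊗ₜ[k] r.right i := by
  simp only [PsiS, LinearMap.comp_apply, lTensor_tmul]
  rw [← r.eq]
  simp only [map_sum, TensorProduct.tmul_sum, rTensor_tmul, lTensor_tmul,
    LinearEquiv.coe_coe, TensorProduct.assoc_symm_tmul, mul'_apply]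

lemma PsiP_apply (x y : H) {ιr : Type*} (r : Coalgebra.Repr k y ιr) :
    PsiP (x ⊗ₜ[k] y) = ∑ i ∈ r.index, (x * r.left i) ⊗ₜ[k] r.right i := by
  simp only [PsiP, LinearMap.comp_apply, lTensor_tmul]
  rw [← r.eq]
  simp only [map_sum, TensorProduct.tmul_sum, rTensor_tmul, lTensor_tmul,
    LinearEquiv.coe_coe, TensorProduct.assoc_symm_tmul, mul'_apply]

lemma genT1 (c y : H) :
    ∑ i ∈ (rA k c).index, ∑ s ∈ (rA k ((rA k c).left i)).index,
      (rA k ((rA k c).left i)).left s ⊗ₜ[k]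
        ((rA k ((rA k c).left i)).right s * (𝑺 ((rA k c).right i) * y))
    = c ⊗ₜ[k] y := by
  have sw := Coalgebra.sum_map_tmul_tmul_eq (R := k)
      (LinearMap.id (R := k) (M := H)) (LinearMap.id (R := k) (M := H))
      (HopfAlgebra.antipode (R := k)) c
      (repr := rA k c) (a₁ := fun i => rA k ((rA k c).left i))
      (a₂ := fun i => rA k ((rA k c).right i))
  apply_fun (lTensor H (μ ∘ₗ lTensor H (mulRight k y))) at sw
  simp only [map_sum, lTensor_tmul, LinearMap.comp_apply, mul'_apply, mulRight_apply,
    LinearMap.id_coe, id_eq] at sw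
  rw [← sw]
  have inner : ∀ i ∈ (rA k c).index,
      ∑ s ∈ (rA k ((rA k c).right i)).index,
        (rA k c).left i ⊗ₜ[k] ((rA k ((rA k c).right i)).left s *
          (𝑺 ((rA k ((rA k c).right i)).right s) * y))
      = ε ((rA k c).right i) • ((rA k c).left i ⊗ₜ[k] y) := by
    intro i _
    rw [← TensorProduct.tmul_sum]
    rw [show ∑ s ∈ (rA k ((rA k c).right i)).index,
          ((rA k ((rA k c).right i)).left s * (𝑺 ((rA k ((rA k c).right i)).right s) * y))
        = (∑ s ∈ (rA k ((rA k c).right i)).index,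
            (rA k ((rA k c).right i)).left s * 𝑺 ((rA k ((rA k c).right i)).right s)) * y from by
      rw [Finset.sum_mul]; exact Finset.sum_congr rfl fun s _ => by rw [mul_assoc]]
    rw [HopfAlgebra.sum_mul_antipode_eq_smul (rA k ((rA k c).right i)), smul_mul_assoc, one_mul,
      TensorProduct.tmul_smul]
  rw [Finset.sum_congr rfl inner]
  rw [show ∑ i ∈ (rA k c).index, ε ((rA k c).right i) • ((rA k c).left i ⊗ₜ[k] y)
      = (∑ i ∈ (rA k c).index, ε ((rA k c).right i) • (rA k c).left i) ⊗ₜ[k] y from by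
    rw [TensorProduct.sum_tmul]
    exact Finset.sum_congr rfl fun i _ => by rw [TensorProduct.smul_tmul']]
  rw [counit_collapse' (rA k c)]

lemma genT2 (c y : H) (F G : H →ₗ[k] H) :
    ∑ j ∈ (rA k c).index, ∑ s ∈ (rA k ((rA k c).left j)).index,
      F ((rA k ((rA k c).left j)).left s) ⊗ₜ[k]
        G (𝑺 ((rA k ((rA k c).left j)).right s) * ((rA k c).right j * y))
    = F c ⊗ₜ[k] G y := by
  have sw := Coalgebra.sum_map_tmul_tmul_eq (R := k)
      F (HopfAlgebra.antipode (R := k)) (LinearMap.id (R := k) (M := H)) c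
      (repr := rA k c) (a₁ := fun i => rA k ((rA k c).left i))
      (a₂ := fun i => rA k ((rA k c).right i))
  apply_fun (lTensor H (G ∘ₗ μ ∘ₗ lTensor H (mulRight k y))) at sw
  simp only [map_sum, lTensor_tmul, LinearMap.comp_apply, mul'_apply, mulRight_apply,
    LinearMap.id_coe, id_eq] at sw
  rw [← sw]
  have inner : ∀ j ∈ (rA k c).index,
      ∑ s ∈ (rA k ((rA k c).right j)).index,
        F ((rA k c).left j) ⊗ₜ[k] G (𝑺 ((rA k ((rA k c).right j)).left s) *
          ((rA k ((rA k c).right j)).right s * y))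
      = ε ((rA k c).right j) • (F ((rA k c).left j) ⊗ₜ[k] G y) := by
    intro j _
    rw [← TensorProduct.tmul_sum, ← map_sum]
    rw [show ∑ s ∈ (rA k ((rA k c).right j)).index,
          (𝑺 ((rA k ((rA k c).right j)).left s) * ((rA k ((rA k c).right j)).right s * y))
        = (∑ s ∈ (rA k ((rA k c).right j)).index,
            𝑺 ((rA k ((rA k c).right j)).left s) * (rA k ((rA k c).right j)).right s) * y from by
      rw [Finset.sum_mul]; exact Finset.sum_congr rfl fun s _ => by rw [mul_assoc]]
    rw [HopfAlgebra.sum_antipode_mul_eq_smul (rA k ((rA k c).right j)), smul_mul_assoc, one_mul,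
      map_smul, TensorProduct.tmul_smul]
  rw [Finset.sum_congr rfl inner]
  rw [show ∑ j ∈ (rA k c).index, ε ((rA k c).right j) • (F ((rA k c).left j) ⊗ₜ[k] G y)
      = (∑ j ∈ (rA k c).index, ε ((rA k c).right j) • F ((rA k c).left j)) ⊗ₜ[k] G y from by
    rw [TensorProduct.sum_tmul]
    exact Finset.sum_congr rfl fun j _ => by rw [TensorProduct.smul_tmul']]
  rw [show ∑ j ∈ (rA k c).index, ε ((rA k c).right j) • F ((rA k c).left j)
      = F (∑ j ∈ (rA k c).index, ε ((rA k c).right j) • (rA k c).left j) from by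
    rw [map_sum]; exact Finset.sum_congr rfl fun j _ => (map_smul F _ _).symm]
  rw [counit_collapse' (rA k c)]

lemma genT1m (c x : H) :
    ∑ j ∈ (rA k c).index, ∑ s ∈ (rA k ((rA k c).right j)).index,
      ((x * 𝑺 ((rA k c).left j)) * (rA k ((rA k c).right j)).left s) ⊗ₜ[k]
        (rA k ((rA k c).right j)).right s
    = x ⊗ₜ[k] c := by
  have sw := Coalgebra.sum_map_tmul_tmul_eq (R := k)
      ((mulLeft k x) ∘ₗ HopfAlgebra.antipode (R := k))
      (LinearMap.id (R := k) (M := H)) (LinearMap.id (R := k) (M := H)) c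
      (repr := rA k c) (a₁ := fun i => rA k ((rA k c).left i))
      (a₂ := fun i => rA k ((rA k c).right i))
  apply_fun (rTensor H μ ∘ₗ (TensorProduct.assoc k H H H).symm.toLinearMap) at sw
  simp only [map_sum, LinearMap.comp_apply, LinearEquiv.coe_coe, TensorProduct.assoc_symm_tmul,
    rTensor_tmul, mul'_apply, mulLeft_apply, LinearMap.id_coe, id_eq] at sw
  rw [sw]
  have inner : ∀ j ∈ (rA k c).index,
      ∑ s ∈ (rA k ((rA k c).left j)).index,
        ((x * 𝑺 ((rA k ((rA k c).left j)).left s)) * (rA k ((rA k c).left j)).right s) ⊗ₜ[k]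
          (rA k c).right j
      = ε ((rA k c).left j) • (x ⊗ₜ[k] (rA k c).right j) := by
    intro j _
    rw [← TensorProduct.sum_tmul]
    rw [show ∑ s ∈ (rA k ((rA k c).left j)).index,
          ((x * 𝑺 ((rA k ((rA k c).left j)).left s)) * (rA k ((rA k c).left j)).right s)
        = x * (∑ s ∈ (rA k ((rA k c).left j)).index,
            𝑺 ((rA k ((rA k c).left j)).left s) * (rA k ((rA k c).left j)).right s) from by
      rw [Finset.mul_sum]; exact Finset.sum_congr rfl fun s _ => by rw [mul_assoc]]
    rw [HopfAlgebra.sum_antipode_mul_eq_smul (rA k ((rA k c).left j)), mul_smul_comm, mul_one,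
      TensorProduct.smul_tmul']
  rw [Finset.sum_congr rfl inner]
  rw [show ∑ j ∈ (rA k c).index, ε ((rA k c).left j) • (x ⊗ₜ[k] (rA k c).right j)
      = x ⊗ₜ[k] (∑ j ∈ (rA k c).index, ε ((rA k c).left j) • (rA k c).right j) from by
    rw [TensorProduct.tmul_sum]
    exact Finset.sum_congr rfl fun j _ => by rw [TensorProduct.tmul_smul]]
  rw [counit_collapse (rA k c)]

lemma genT2m (c x w : H) (G : H →ₗ[k] H) :
    ∑ j ∈ (rA k c).index, ∑ s ∈ (rA k ((rA k c).right j)).index,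
      ((x * (rA k c).left j) * (𝑺 ((rA k ((rA k c).right j)).left s) * w)) ⊗ₜ[k]
        G ((rA k ((rA k c).right j)).right s)
    = (x * w) ⊗ₜ[k] G c := by
  have sw := Coalgebra.sum_map_tmul_tmul_eq (R := k)
      (mulLeft k x) (HopfAlgebra.antipode (R := k)) G c
      (repr := rA k c) (a₁ := fun i => rA k ((rA k c).left i))
      (a₂ := fun i => rA k ((rA k c).right i))
  apply_fun (rTensor H (μ ∘ₗ lTensor H (mulRight k w)) ∘ₗ
      (TensorProduct.assoc k H H H).symm.toLinearMap) at sw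
  simp only [map_sum, LinearMap.comp_apply, LinearEquiv.coe_coe, TensorProduct.assoc_symm_tmul,
    rTensor_tmul, lTensor_tmul, mul'_apply, mulLeft_apply, mulRight_apply] at sw
  rw [sw]
  have inner : ∀ j ∈ (rA k c).index,
      ∑ s ∈ (rA k ((rA k c).left j)).index,
        ((x * (rA k ((rA k c).left j)).left s) *
          (𝑺 ((rA k ((rA k c).left j)).right s) * w)) ⊗ₜ[k] G ((rA k c).right j)
      = ε ((rA k c).left j) • ((x * w) ⊗ₜ[k] G ((rA k c).right j)) := by
    intro j _
    rw [← TensorProduct.sum_tmul]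
    rw [show ∑ s ∈ (rA k ((rA k c).left j)).index,
          ((x * (rA k ((rA k c).left j)).left s) * (𝑺 ((rA k ((rA k c).left j)).right s) * w))
        = x * ((∑ s ∈ (rA k ((rA k c).left j)).index,
            (rA k ((rA k c).left j)).left s * 𝑺 ((rA k ((rA k c).left j)).right s)) * w) from by
      rw [Finset.sum_mul, Finset.mul_sum]
      exact Finset.sum_congr rfl fun s _ => by rw [mul_assoc, mul_assoc]]
    rw [HopfAlgebra.sum_mul_antipode_eq_smul (rA k ((rA k c).left j)), smul_mul_assoc, one_mul,
      mul_smul_comm, TensorProduct.smul_tmul']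
  rw [Finset.sum_congr rfl inner]
  rw [show ∑ j ∈ (rA k c).index, ε ((rA k c).left j) • ((x * w) ⊗ₜ[k] G ((rA k c).right j))
      = (x * w) ⊗ₜ[k] G (∑ j ∈ (rA k c).index, ε ((rA k c).left j) • (rA k c).right j) from by
    rw [map_sum, TensorProduct.tmul_sum]
    exact Finset.sum_congr rfl fun j _ => by rw [map_smul, TensorProduct.tmul_smul]]
  rw [counit_collapse (rA k c)]

lemma PhiP_PhiS : (PhiP : H ⊗[k] H →ₗ[k] H ⊗[k] H) ∘ₗ PhiS = LinearMap.id := by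
  apply TensorProduct.ext'
  intro x y
  rw [LinearMap.comp_apply, LinearMap.id_apply, PhiS_apply x y (rA k x), map_sum]
  rw [Finset.sum_congr rfl fun i (_ : i ∈ (rA k x).index) =>
    PhiP_apply ((rA k x).left i) (𝑺 ((rA k x).right i) * y) (rA k ((rA k x).left i))]
  exact genT1 x y

lemma PsiP_PsiS : (PsiP : H ⊗[k] H →ₗ[k] H ⊗[k] H) ∘ₗ PsiS = LinearMap.id := by
  apply TensorProduct.ext'
  intro x y
  rw [LinearMap.comp_apply, LinearMap.id_apply, PsiS_apply x y (rA k y), map_sum]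
  rw [Finset.sum_congr rfl fun j (_ : j ∈ (rA k y).index) =>
    PsiP_apply (x * 𝑺 ((rA k y).left j)) ((rA k y).right j) (rA k ((rA k y).right j))]
  exact genT1m y x

lemma PhiS_intertwine (h : H) :
    PhiS ∘ₗ mulLeft k (Coalgebra.comul (R := k) h) =
      rTensor H (mulLeft k h) ∘ₗ (PhiS : H ⊗[k] H →ₗ[k] H ⊗[k] H) := by
  apply TensorProduct.ext'
  intro x y
  simp only [LinearMap.comp_apply, mulLeft_apply]
  rw [PhiS_apply x y (rA k x), map_sum]
  simp only [rTensor_tmul, mulLeft_apply]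
  rw [← (rA k h).eq, Finset.sum_mul, map_sum]
  simp only [Algebra.TensorProduct.tmul_mul_tmul]
  rw [Finset.sum_congr rfl fun j (_ : j ∈ (rA k h).index) =>
    PhiS_apply ((rA k h).left j * x) ((rA k h).right j * y)
      (mulRepr (rA k ((rA k h).left j)) (rA k x))]
  have expand : ∀ j ∈ (rA k h).index,
      ∑ p ∈ (mulRepr (rA k ((rA k h).left j)) (rA k x)).index,
        (mulRepr (rA k ((rA k h).left j)) (rA k x)).left p ⊗ₜ[k]
          (𝑺 ((mulRepr (rA k ((rA k h).left j)) (rA k x)).right p) * ((rA k h).right j * y))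
      = ∑ t ∈ (rA k x).index, ∑ s ∈ (rA k ((rA k h).left j)).index,
          ((rA k ((rA k h).left j)).left s * (rA k x).left t) ⊗ₜ[k]
            (𝑺 ((rA k x).right t) * (𝑺 ((rA k ((rA k h).left j)).right s) *
              ((rA k h).right j * y))) := by
    intro j _
    show ∑ p ∈ (rA k ((rA k h).left j)).index ×ˢ (rA k x).index, _ = _
    rw [Finset.sum_product]
    rw [Finset.sum_comm]
    refine Finset.sum_congr rfl fun t _ => Finset.sum_congr rfl fun s _ => ?_
    rw [show (mulRepr (rA k ((rA k h).left j)) (rA k x)).right (s, t)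
        = (rA k ((rA k h).left j)).right s * (rA k x).right t from rfl]
    rw [S_mul, mul_assoc]
    rfl
  rw [Finset.sum_congr rfl expand, Finset.sum_comm]
  refine Finset.sum_congr rfl fun t _ => ?_
  have g := genT2 (k := k) h y (mulRight k ((rA k x).left t))
    (mulLeft k (𝑺 ((rA k x).right t)))
  simp only [mulRight_apply, mulLeft_apply] at g
  exact g

lemma PsiS_intertwine (h : H) :
    PsiS ∘ₗ mulRight k (Coalgebra.comul (R := k) h) =
      lTensor H (mulRight k h) ∘ₗ (PsiS : H ⊗[k] H →ₗ[k] H ⊗[k] H) := by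
  apply TensorProduct.ext'
  intro x y
  simp only [LinearMap.comp_apply, mulRight_apply]
  rw [PsiS_apply x y (rA k y), map_sum]
  simp only [lTensor_tmul, mulRight_apply]
  rw [← (rA k h).eq, Finset.mul_sum, map_sum]
  simp only [Algebra.TensorProduct.tmul_mul_tmul]
  rw [Finset.sum_congr rfl fun j (_ : j ∈ (rA k h).index) =>
    PsiS_apply (x * (rA k h).left j) (y * (rA k h).right j)
      (mulRepr (rA k y) (rA k ((rA k h).right j)))]
  have expand : ∀ j ∈ (rA k h).index,
      ∑ p ∈ (mulRepr (rA k y) (rA k ((rA k h).right j))).index,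
        ((x * (rA k h).left j) *
          𝑺 ((mulRepr (rA k y) (rA k ((rA k h).right j))).left p)) ⊗ₜ[k]
          (mulRepr (rA k y) (rA k ((rA k h).right j))).right p
      = ∑ t ∈ (rA k y).index, ∑ s ∈ (rA k ((rA k h).right j)).index,
          ((x * (rA k h).left j) * (𝑺 ((rA k ((rA k h).right j)).left s) *
            𝑺 ((rA k y).left t))) ⊗ₜ[k]
            ((rA k y).right t * (rA k ((rA k h).right j)).right s) := by
    intro j _
    show ∑ p ∈ (rA k y).index ×ˢ (rA k ((rA k h).right j)).index, _ = _
    rw [Finset.sum_product]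
    refine Finset.sum_congr rfl fun t _ => Finset.sum_congr rfl fun s _ => ?_
    rw [show (mulRepr (rA k y) (rA k ((rA k h).right j))).left (t, s)
        = (rA k y).left t * (rA k ((rA k h).right j)).left s from rfl]
    rw [S_mul]
    rfl
  rw [Finset.sum_congr rfl expand, Finset.sum_comm]
  refine Finset.sum_congr rfl fun t _ => ?_
  have g := genT2m (k := k) h x (𝑺 ((rA k y).left t)) (mulLeft k ((rA k y).right t))
  simp only [mulLeft_apply] at g
  exact g

lemma mulLeft_comul_eq (h : H) :
    mulLeft k (Coalgebra.comul (R := k) h) =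
      PhiP ∘ₗ rTensor H (mulLeft k h) ∘ₗ (PhiS : H ⊗[k] H →ₗ[k] H ⊗[k] H) := by
  conv_lhs => rw [← LinearMap.id_comp (mulLeft k (Coalgebra.comul (R := k) h)), ← PhiP_PhiS]
  rw [LinearMap.comp_assoc, PhiS_intertwine, ← LinearMap.comp_assoc, LinearMap.comp_assoc]

lemma mulRight_comul_eq (h : H) :
    mulRight k (Coalgebra.comul (R := k) h) =
      PsiP ∘ₗ lTensor H (mulRight k h) ∘ₗ (PsiS : H ⊗[k] H →ₗ[k] H ⊗[k] H) := by
  conv_lhs => rw [← LinearMap.id_comp (mulRight k (Coalgebra.comul (R := k) h)), ← PsiP_PsiS]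
  rw [LinearMap.comp_assoc, PsiS_intertwine, ← LinearMap.comp_assoc, LinearMap.comp_assoc]

section FD
variable [FiniteDimensional k H]

lemma trace_basis {M : Type*} [AddCommGroup M] [Module k M] {ι₀ : Type*} [Fintype ι₀]
    (b : Module.Basis ι₀ k M) (f : M →ₗ[k] M) :
    trace k M f = ∑ i, b.coord i (f (b i)) := by
  classical
  rw [trace_eq_matrix_trace k b f, Matrix.trace]
  simp [Matrix.diag, LinearMap.toMatrix_apply, Module.Basis.coord_apply]

lemma trace_smulRight (q : H →ₗ[k] k) (v : H) :
    trace k H (q.smulRight v) = q v := by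
  let β := Module.Free.chooseBasis k H
  rw [trace_basis β]
  simp only [smulRight_apply, Module.Basis.coord_apply, map_smul, smul_eq_mul]
  calc ∑ i, q (β i) * β.repr v i
      = q (∑ i, β.repr v i • β i) := by
        rw [map_sum]
        exact Finset.sum_congr rfl fun i _ => by rw [map_smul, smul_eq_mul, mul_comm]
    _ = q v := by rw [Module.Basis.sum_repr]

lemma mulLeft_tmul (a c : H) :
    mulLeft k (a ⊗ₜ[k] c) = TensorProduct.map (mulLeft k a) (mulLeft k c) := by
  apply TensorProduct.ext'
  intro x y
  simp [Algebra.TensorProduct.tmul_mul_tmul]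

lemma mulRight_tmul (a c : H) :
    mulRight k (a ⊗ₜ[k] c) = TensorProduct.map (mulRight k a) (mulRight k c) := by
  apply TensorProduct.ext'
  intro x y
  simp [Algebra.TensorProduct.tmul_mul_tmul]

lemma mulLeft_smul' (c : k) (a : H) : mulLeft k (c • a) = c • mulLeft k a := by
  apply LinearMap.ext; intro x; simp [smul_mul_assoc]

lemma mulRight_smul' (c : k) (a : H) : mulRight k (c • a) = c • mulRight k a := by
  apply LinearMap.ext; intro x; simp [mul_smul_comm]

lemma mulLeft_add' {A : Type*} [Ring A] [Algebra k A] (u v : A) :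
    mulLeft k (u + v) = mulLeft k u + mulLeft k v := by
  apply LinearMap.ext; intro x; simp [add_mul]

lemma mulRight_add' {A : Type*} [Ring A] [Algebra k A] (u v : A) :
    mulRight k (u + v) = mulRight k u + mulRight k v := by
  apply LinearMap.ext; intro x; simp [mul_add]

lemma step1 (q : H →ₗ[k] k) (u : H ⊗[k] H) :
    trace k (H ⊗[k] H) (mulLeft k u ∘ₗ lTensor H (q.smulRight (1 : H)))
      = trace k H (mulLeft k ((TensorProduct.rid k H) (lTensor H q u))) := by
  induction u using TensorProduct.induction_on with
  | zero => simp [LinearMap.mulLeft_zero_eq_zero]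
  | tmul a c =>
      rw [_root_.mulLeft_tmul]
      rw [show TensorProduct.map (mulLeft k a) (mulLeft k c) ∘ₗ lTensor H (q.smulRight (1 : H))
          = TensorProduct.map (mulLeft k a) (mulLeft k c ∘ₗ q.smulRight (1 : H)) from
        LinearMap.map_comp_lTensor _ _ _ _]
      rw [trace_tensorProduct']
      rw [show mulLeft k c ∘ₗ q.smulRight (1 : H) = q.smulRight c from by
        apply LinearMap.ext; intro x; simp]
      rw [_root_.trace_smulRight]
      rw [lTensor_tmul, TensorProduct.rid_tmul, mulLeft_smul', map_smul]
      rw [smul_eq_mul, mul_comm]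
  | add u v hu hv =>
      rw [mulLeft_add', add_comp, map_add, hu, hv, map_add, map_add, mulLeft_add', map_add]

lemma step1m (q : H →ₗ[k] k) (u : H ⊗[k] H) :
    trace k (H ⊗[k] H) (mulRight k u ∘ₗ rTensor H (q.smulRight (1 : H)))
      = trace k H (mulRight k ((TensorProduct.lid k H) (rTensor H q u))) := by
  induction u using TensorProduct.induction_on with
  | zero => simp [LinearMap.mulRight_zero_eq_zero]
  | tmul a c =>
      rw [_root_.mulRight_tmul]
      rw [show TensorProduct.map (mulRight k a) (mulRight k c) ∘ₗ rTensor H (q.smulRight (1 : H))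
          = TensorProduct.map (mulRight k a ∘ₗ q.smulRight (1 : H)) (mulRight k c) from
        LinearMap.map_comp_rTensor _ _ _ _]
      rw [trace_tensorProduct']
      rw [show mulRight k a ∘ₗ q.smulRight (1 : H) = q.smulRight a from by
        apply LinearMap.ext; intro x; simp]
      rw [_root_.trace_smulRight]
      rw [rTensor_tmul, TensorProduct.lid_tmul, mulRight_smul', map_smul]
      rw [smul_eq_mul]
  | add u v hu hv =>
      rw [mulRight_add', add_comp, map_add, hu, hv, map_add, map_add, mulRight_add', map_add]

lemma dual_sum {ι₀ : Type*} [Fintype ι₀] (β : Module.Basis ι₀ k H) (q : H →ₗ[k] k) (c d : H) :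
    ∑ j, β.repr d j * q (c * β j) = q (c * d) := by
  calc ∑ j, β.repr d j * q (c * β j)
      = q (c * ∑ j, β.repr d j • β j) := by
        rw [Finset.mul_sum, map_sum]
        exact Finset.sum_congr rfl fun j _ => by rw [mul_smul_comm, map_smul, smul_eq_mul]
    _ = q (c * d) := by rw [Module.Basis.sum_repr]

lemma dual_sum' {ι₀ : Type*} [Fintype ι₀] (β : Module.Basis ι₀ k H) (q : H →ₗ[k] k) (c d : H) :
    ∑ j, β.repr d j * q (β j * c) = q (d * c) := by
  calc ∑ j, β.repr d j * q (β j * c)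
      = q ((∑ j, β.repr d j • β j) * c) := by
        rw [Finset.sum_mul, map_sum]
        exact Finset.sum_congr rfl fun j _ => by rw [smul_mul_assoc, map_smul, smul_eq_mul]
    _ = q (d * c) := by rw [Module.Basis.sum_repr]

end FD

section FD2
variable [FiniteDimensional k H]

lemma step3core (hS2 : ∀ h : H, 𝑺 (𝑺 h) = h) (q : H →ₗ[k] k) (h : H)
    {ι₀ : Type*} [Fintype ι₀] (β : Module.Basis ι₀ k H) (i : ι₀) :
    ∑ s ∈ (rA k (β i)).index, ∑ t ∈ (rA k ((rA k (β i)).left s)).index,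
      q ((rA k (β i)).right s * 𝑺 ((rA k ((rA k (β i)).left s)).right t)) *
        β.repr (h * (rA k ((rA k (β i)).left s)).left t) i
    = q 1 * β.repr (h * β i) i := by
  have sw := Coalgebra.sum_map_tmul_tmul_eq (R := k)
      (LinearMap.id (R := k) (M := H)) (HopfAlgebra.antipode (R := k))
      (LinearMap.id (R := k) (M := H)) (β i)
      (repr := rA k (β i)) (a₁ := fun s => rA k ((rA k (β i)).left s))
      (a₂ := fun s => rA k ((rA k (β i)).right s))
  apply_fun (LinearMap.mul' k k ∘ₗ TensorProduct.map ((β.coord i) ∘ₗ mulLeft k h)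
      (q ∘ₗ μ ∘ₗ (TensorProduct.comm k H H).toLinearMap)) at sw
  simp only [map_sum, LinearMap.comp_apply, TensorProduct.map_tmul, TensorProduct.comm_tmul,
    mul'_apply, mulLeft_apply, Module.Basis.coord_apply, LinearMap.id_coe, id_eq,
    LinearEquiv.coe_coe] at sw
  rw [Finset.sum_congr rfl fun s (_ : s ∈ (rA k (β i)).index) =>
    Finset.sum_congr rfl fun t (_ : t ∈ (rA k ((rA k (β i)).left s)).index) =>
      mul_comm (q ((rA k (β i)).right s * 𝑺 ((rA k ((rA k (β i)).left s)).right t)))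
        (β.repr (h * (rA k ((rA k (β i)).left s)).left t) i)]
  rw [← sw]
  have inner : ∀ s ∈ (rA k (β i)).index,
      ∑ t ∈ (rA k ((rA k (β i)).right s)).index,
        β.repr (h * (rA k (β i)).left s) i *
          q ((rA k ((rA k (β i)).right s)).right t * 𝑺 ((rA k ((rA k (β i)).right s)).left t))
      = ε ((rA k (β i)).right s) • (β.repr (h * (rA k (β i)).left s) i * q 1) := by
    intro s _
    rw [← Finset.mul_sum, ← map_sum, op_r hS2 (rA k ((rA k (β i)).right s)), map_smul]
    rw [smul_eq_mul, smul_eq_mul]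
    ring
  rw [Finset.sum_congr rfl inner]
  have key2 : ∑ s ∈ (rA k (β i)).index,
      ε ((rA k (β i)).right s) • (h * (rA k (β i)).left s) = h * β i := by
    calc ∑ s ∈ (rA k (β i)).index, ε ((rA k (β i)).right s) • (h * (rA k (β i)).left s)
        = h * ∑ s ∈ (rA k (β i)).index, ε ((rA k (β i)).right s) • (rA k (β i)).left s := by
          rw [Finset.mul_sum]
          exact Finset.sum_congr rfl fun s _ => (mul_smul_comm _ _ _).symm
      _ = h * β i := by rw [counit_collapse']
  calc ∑ s ∈ (rA k (β i)).index,
        ε ((rA k (β i)).right s) • (β.repr (h * (rA k (β i)).left s) i * q 1)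
      = (∑ s ∈ (rA k (β i)).index,
          β.repr (ε ((rA k (β i)).right s) • (h * (rA k (β i)).left s)) i) * q 1 := by
        rw [Finset.sum_mul]
        refine Finset.sum_congr rfl fun s _ => ?_
        rw [map_smul, Finsupp.smul_apply, smul_eq_mul, smul_eq_mul]
        ring
    _ = β.repr (h * β i) i * q 1 := by
        rw [← Finset.sum_apply', ← map_sum, key2]
    _ = q 1 * β.repr (h * β i) i := mul_comm _ _

lemma step3 (hS2 : ∀ h : H, 𝑺 (𝑺 h) = h) (q : H →ₗ[k] k) (h : H) :
    trace k (H ⊗[k] H)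
      (rTensor H (mulLeft k h) ∘ₗ PhiS ∘ₗ lTensor H (q.smulRight (1 : H)) ∘ₗ PhiP)
      = q 1 * trace k H (mulLeft k h) := by
  classical
  set β := Module.Free.chooseBasis k H with hβ
  have Fval : ∀ i j, (rTensor H (mulLeft k h) ∘ₗ PhiS ∘ₗ lTensor H (q.smulRight (1 : H)) ∘ₗ PhiP)
      (β i ⊗ₜ[k] β j)
      = ∑ s ∈ (rA k (β i)).index, ∑ t ∈ (rA k ((rA k (β i)).left s)).index,
          q ((rA k (β i)).right s * β j) •
            ((h * (rA k ((rA k (β i)).left s)).left t) ⊗ₜ[k]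
              𝑺 ((rA k ((rA k (β i)).left s)).right t)) := by
    intro i j
    simp only [LinearMap.comp_apply]
    rw [PhiP_apply _ _ (rA k (β i)), map_sum, map_sum, map_sum]
    refine Finset.sum_congr rfl fun s _ => ?_
    rw [lTensor_tmul, smulRight_apply, TensorProduct.tmul_smul, map_smul, map_smul]
    rw [PhiS_apply _ _ (rA k ((rA k (β i)).left s)), map_sum, Finset.smul_sum]
    refine Finset.sum_congr rfl fun t _ => ?_
    rw [rTensor_tmul, mulLeft_apply, mul_one]
  rw [trace_basis (β.tensorProduct β), Fintype.sum_prod_type]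
  have coordval : ∀ i j, (β.tensorProduct β).coord (i, j)
      ((rTensor H (mulLeft k h) ∘ₗ PhiS ∘ₗ lTensor H (q.smulRight (1 : H)) ∘ₗ PhiP)
        ((β.tensorProduct β) (i, j)))
      = ∑ s ∈ (rA k (β i)).index, ∑ t ∈ (rA k ((rA k (β i)).left s)).index,
          q ((rA k (β i)).right s * β j) *
            (β.repr (𝑺 ((rA k ((rA k (β i)).left s)).right t)) j *
              β.repr (h * (rA k ((rA k (β i)).left s)).left t) i) := by
    intro i j
    rw [Module.Basis.tensorProduct_apply, Fval i j, Module.Basis.coord_apply, map_sum, Finset.sum_apply']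
    refine Finset.sum_congr rfl fun s _ => ?_
    rw [map_sum, Finset.sum_apply']
    refine Finset.sum_congr rfl fun t _ => ?_
    rw [map_smul, Finsupp.smul_apply, Module.Basis.tensorProduct_repr_tmul_apply, smul_eq_mul,
      smul_eq_mul]
  rw [Finset.sum_congr rfl fun i (_ : i ∈ Finset.univ) =>
    Finset.sum_congr rfl fun j (_ : j ∈ Finset.univ) => coordval i j]
  have jsum : ∀ i : Module.Free.ChooseBasisIndex k H,
      ∑ j, ∑ s ∈ (rA k (β i)).index, ∑ t ∈ (rA k ((rA k (β i)).left s)).index,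
        q ((rA k (β i)).right s * β j) *
          (β.repr (𝑺 ((rA k ((rA k (β i)).left s)).right t)) j *
            β.repr (h * (rA k ((rA k (β i)).left s)).left t) i)
      = ∑ s ∈ (rA k (β i)).index, ∑ t ∈ (rA k ((rA k (β i)).left s)).index,
          q ((rA k (β i)).right s * 𝑺 ((rA k ((rA k (β i)).left s)).right t)) *
            β.repr (h * (rA k ((rA k (β i)).left s)).left t) i := by
    intro i
    rw [Finset.sum_comm]
    refine Finset.sum_congr rfl fun s _ => ?_
    rw [Finset.sum_comm]
    refine Finset.sum_congr rfl fun t _ => ?_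
    rw [← dual_sum β q ((rA k (β i)).right s) (𝑺 ((rA k ((rA k (β i)).left s)).right t)),
      Finset.sum_mul]
    exact Finset.sum_congr rfl fun j _ => by ring
  rw [Finset.sum_congr rfl fun i (_ : i ∈ Finset.univ) => jsum i]
  rw [Finset.sum_congr rfl fun i (_ : i ∈ Finset.univ) => step3core hS2 q h β i]
  rw [← Finset.mul_sum, trace_basis β]
  simp only [Module.Basis.coord_apply, mulLeft_apply]

lemma step3corem (hS2 : ∀ h : H, 𝑺 (𝑺 h) = h) (q : H →ₗ[k] k) (h : H)
    {ι₀ : Type*} [Fintype ι₀] (β : Module.Basis ι₀ k H) (j : ι₀) :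
    ∑ s ∈ (rA k (β j)).index, ∑ t ∈ (rA k ((rA k (β j)).right s)).index,
      q (𝑺 ((rA k ((rA k (β j)).right s)).left t) * (rA k (β j)).left s) *
        β.repr ((rA k ((rA k (β j)).right s)).right t * h) j
    = q 1 * β.repr (β j * h) j := by
  have sw := Coalgebra.sum_map_tmul_tmul_eq (R := k)
      (LinearMap.id (R := k) (M := H)) (HopfAlgebra.antipode (R := k))
      (LinearMap.id (R := k) (M := H)) (β j)
      (repr := rA k (β j)) (a₁ := fun s => rA k ((rA k (β j)).left s))
      (a₂ := fun s => rA k ((rA k (β j)).right s))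
  apply_fun (LinearMap.mul' k k ∘ₗ TensorProduct.map
      (q ∘ₗ μ ∘ₗ (TensorProduct.comm k H H).toLinearMap) ((β.coord j) ∘ₗ mulRight k h) ∘ₗ
      (TensorProduct.assoc k H H H).symm.toLinearMap) at sw
  simp only [map_sum, LinearMap.comp_apply, LinearEquiv.coe_coe, TensorProduct.assoc_symm_tmul,
    TensorProduct.map_tmul, TensorProduct.comm_tmul, mul'_apply, mulRight_apply,
    Module.Basis.coord_apply, LinearMap.id_coe, id_eq] at sw
  rw [sw]
  have inner : ∀ s ∈ (rA k (β j)).index,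
      ∑ t ∈ (rA k ((rA k (β j)).left s)).index,
        q (𝑺 ((rA k ((rA k (β j)).left s)).right t) * (rA k ((rA k (β j)).left s)).left t) *
          β.repr ((rA k (β j)).right s * h) j
      = ε ((rA k (β j)).left s) • (q 1 * β.repr ((rA k (β j)).right s * h) j) := by
    intro s _
    rw [← Finset.sum_mul, ← map_sum, op_l hS2 (rA k ((rA k (β j)).left s)), map_smul]
    rw [smul_eq_mul, smul_eq_mul]
    ring
  rw [Finset.sum_congr rfl inner]
  have key2 : ∑ s ∈ (rA k (β j)).index,
      ε ((rA k (β j)).left s) • ((rA k (β j)).right s * h) = β j * h := by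
    calc ∑ s ∈ (rA k (β j)).index, ε ((rA k (β j)).left s) • ((rA k (β j)).right s * h)
        = (∑ s ∈ (rA k (β j)).index, ε ((rA k (β j)).left s) • (rA k (β j)).right s) * h := by
          rw [Finset.sum_mul]
          exact Finset.sum_congr rfl fun s _ => (smul_mul_assoc _ _ _).symm
      _ = β j * h := by rw [counit_collapse]
  calc ∑ s ∈ (rA k (β j)).index,
        ε ((rA k (β j)).left s) • (q 1 * β.repr ((rA k (β j)).right s * h) j)
      = q 1 * ∑ s ∈ (rA k (β j)).index,
          β.repr (ε ((rA k (β j)).left s) • ((rA k (β j)).right s * h)) j := by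
        rw [Finset.mul_sum]
        refine Finset.sum_congr rfl fun s _ => ?_
        rw [map_smul, Finsupp.smul_apply, smul_eq_mul, smul_eq_mul]
        ring
    _ = q 1 * β.repr (β j * h) j := by
        rw [← Finset.sum_apply', ← map_sum, key2]

lemma step3m (hS2 : ∀ h : H, 𝑺 (𝑺 h) = h) (q : H →ₗ[k] k) (h : H) :
    trace k (H ⊗[k] H)
      (lTensor H (mulRight k h) ∘ₗ PsiS ∘ₗ rTensor H (q.smulRight (1 : H)) ∘ₗ PsiP)
      = q 1 * trace k H (mulRight k h) := by
  classical
  set β := Module.Free.chooseBasis k H with hβ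
  have Fval : ∀ i j, (lTensor H (mulRight k h) ∘ₗ PsiS ∘ₗ rTensor H (q.smulRight (1 : H)) ∘ₗ PsiP)
      (β i ⊗ₜ[k] β j)
      = ∑ s ∈ (rA k (β j)).index, ∑ t ∈ (rA k ((rA k (β j)).right s)).index,
          q (β i * (rA k (β j)).left s) •
            (𝑺 ((rA k ((rA k (β j)).right s)).left t) ⊗ₜ[k]
              ((rA k ((rA k (β j)).right s)).right t * h)) := by
    intro i j
    simp only [LinearMap.comp_apply]
    rw [PsiP_apply _ _ (rA k (β j)), map_sum, map_sum, map_sum]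
    refine Finset.sum_congr rfl fun s _ => ?_
    rw [rTensor_tmul, smulRight_apply, ← TensorProduct.smul_tmul', map_smul, map_smul]
    rw [PsiS_apply _ _ (rA k ((rA k (β j)).right s)), map_sum, Finset.smul_sum]
    refine Finset.sum_congr rfl fun t _ => ?_
    rw [lTensor_tmul, mulRight_apply, one_mul]
  rw [trace_basis (β.tensorProduct β), Fintype.sum_prod_type]
  have coordval : ∀ i j, (β.tensorProduct β).coord (i, j)
      ((lTensor H (mulRight k h) ∘ₗ PsiS ∘ₗ rTensor H (q.smulRight (1 : H)) ∘ₗ PsiP)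
        ((β.tensorProduct β) (i, j)))
      = ∑ s ∈ (rA k (β j)).index, ∑ t ∈ (rA k ((rA k (β j)).right s)).index,
          q (β i * (rA k (β j)).left s) *
            (β.repr ((rA k ((rA k (β j)).right s)).right t * h) j *
              β.repr (𝑺 ((rA k ((rA k (β j)).right s)).left t)) i) := by
    intro i j
    rw [Module.Basis.tensorProduct_apply, Fval i j, Module.Basis.coord_apply, map_sum, Finset.sum_apply']
    refine Finset.sum_congr rfl fun s _ => ?_
    rw [map_sum, Finset.sum_apply']
    refine Finset.sum_congr rfl fun t _ => ?_
    rw [map_smul, Finsupp.smul_apply, Module.Basis.tensorProduct_repr_tmul_apply, smul_eq_mul,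
      smul_eq_mul]
  rw [Finset.sum_congr rfl fun i (_ : i ∈ Finset.univ) =>
    Finset.sum_congr rfl fun j (_ : j ∈ Finset.univ) => coordval i j]
  rw [Finset.sum_comm]
  have isum : ∀ j : Module.Free.ChooseBasisIndex k H,
      ∑ i, ∑ s ∈ (rA k (β j)).index, ∑ t ∈ (rA k ((rA k (β j)).right s)).index,
        q (β i * (rA k (β j)).left s) *
          (β.repr ((rA k ((rA k (β j)).right s)).right t * h) j *
            β.repr (𝑺 ((rA k ((rA k (β j)).right s)).left t)) i)
      = ∑ s ∈ (rA k (β j)).index, ∑ t ∈ (rA k ((rA k (β j)).right s)).index,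
          q (𝑺 ((rA k ((rA k (β j)).right s)).left t) * (rA k (β j)).left s) *
            β.repr ((rA k ((rA k (β j)).right s)).right t * h) j := by
    intro j
    rw [Finset.sum_comm]
    refine Finset.sum_congr rfl fun s _ => ?_
    rw [Finset.sum_comm]
    refine Finset.sum_congr rfl fun t _ => ?_
    rw [← dual_sum' β q ((rA k (β j)).left s) (𝑺 ((rA k ((rA k (β j)).right s)).left t)),
      Finset.sum_mul]
    exact Finset.sum_congr rfl fun i _ => by ring
  rw [Finset.sum_congr rfl fun j (_ : j ∈ Finset.univ) => isum j]
  rw [Finset.sum_congr rfl fun j (_ : j ∈ Finset.univ) => step3corem hS2 q h β j]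
  rw [← Finset.mul_sum, trace_basis β]
  simp only [Module.Basis.coord_apply, mulRight_apply]

end FD2

section KK
variable [FiniteDimensional k H]

lemma bigK (hS2 : ∀ h : H, 𝑺 (𝑺 h) = h) (q : H →ₗ[k] k) (h : H) :
    trace k H (mulLeft k ((TensorProduct.rid k H) (lTensor H q (Coalgebra.comul (R := k) h))))
      = q 1 * trace k H (mulLeft k h) := by
  rw [← step1 q (Coalgebra.comul (R := k) h), mulLeft_comul_eq h]
  have assoc1 : (PhiP ∘ₗ rTensor H (mulLeft k h) ∘ₗ (PhiS : H ⊗[k] H →ₗ[k] H ⊗[k] H)) ∘ₗ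
      lTensor H (q.smulRight (1 : H))
      = PhiP ∘ₗ ((rTensor H (mulLeft k h) ∘ₗ PhiS) ∘ₗ lTensor H (q.smulRight (1 : H))) := rfl
  rw [assoc1, trace_comp_comm']
  exact step3 hS2 q h

lemma bigKm (hS2 : ∀ h : H, 𝑺 (𝑺 h) = h) (q : H →ₗ[k] k) (h : H) :
    trace k H (mulRight k ((TensorProduct.lid k H) (rTensor H q (Coalgebra.comul (R := k) h))))
      = q 1 * trace k H (mulRight k h) := by
  rw [← step1m q (Coalgebra.comul (R := k) h), mulRight_comul_eq h]
  have assoc1 : (PsiP ∘ₗ lTensor H (mulRight k h) ∘ₗ (PsiS : H ⊗[k] H →ₗ[k] H ⊗[k] H)) ∘ₗ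
      rTensor H (q.smulRight (1 : H))
      = PsiP ∘ₗ ((lTensor H (mulRight k h) ∘ₗ PsiS) ∘ₗ rTensor H (q.smulRight (1 : H))) := rfl
  rw [assoc1, trace_comp_comm']
  exact step3m hS2 q h

end KK

/-- `H` finite-dimensional Hopf algebra over `k` with `S² = id` and
`dim_k(H)·1 ≠ 0` in `k`.  For a basis `(eᵢ)` with dual basis `(eⁱ)`, the functional
`λ(x) = Σᵢ eⁱ(x·eᵢ)` equals `x ↦ Σᵢ eⁱ(eᵢ·x)`, is nonzero, is a two-sided integral
for `H` in `H⁎`, and is cocommutative. -/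
theorem statement19 [FiniteDimensional k H]
    (hS2 : ∀ h : H, HopfAlgebra.antipode (R := k) (HopfAlgebra.antipode (R := k) h) = h)
    (hdim : (Module.finrank k H : k) ≠ 0)
    {ι : Type*} [Fintype ι] (b : Module.Basis ι k H)
    (lam : H →ₗ[k] k)
    (hlam : lam = ∑ i : ι, (b.coord i) ∘ₗ (LinearMap.mulRight k (b i))) :
    lam = (∑ i : ι, (b.coord i) ∘ₗ (LinearMap.mulLeft k (b i))) ∧
    lam ≠ 0 ∧
    (∀ h : H, swr lam h = lam h • (1 : H)) ∧
    (∀ h : H, swl lam h = lam h • (1 : H)) ∧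
    (∀ x y : H, lam (x * y) = lam (y * x)) := by
  classical
  have lamval : ∀ x : H, lam x = trace k H (mulLeft k x) := by
    intro x
    rw [hlam, trace_basis b, LinearMap.sum_apply]
    exact Finset.sum_congr rfl fun i _ => by simp
  have rhoval1 : ∀ x : H, (∑ i : ι, (b.coord i) ∘ₗ (LinearMap.mulLeft k (b i))) x
      = trace k H (mulRight k x) := by
    intro x
    rw [LinearMap.sum_apply, trace_basis b]
    exact Finset.sum_congr rfl fun i _ => by simp
  set rho : H →ₗ[k] k := (trace k H) ∘ₗ (LinearMap.mul k H).flip with hrho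
  have rhoval : ∀ x : H, rho x = trace k H (mulRight k x) := by
    intro x
    have hx : (LinearMap.mul k H).flip x = mulRight k x := by
      apply LinearMap.ext; intro y; simp [LinearMap.mul_apply']
    simp [hrho, hx]
  have swr_eq : ∀ (f : H →ₗ[k] k) (h : H),
      swr f h = (TensorProduct.rid k H) (lTensor H f (Coalgebra.comul (R := k) h)) :=
    fun f h => rfl
  have swl_eq : ∀ (f : H →ₗ[k] k) (h : H),
      swl f h = (TensorProduct.lid k H) (rTensor H f (Coalgebra.comul (R := k) h)) :=
    fun f h => rfl
  have BR : ∀ (f g : H →ₗ[k] k) (u : H ⊗[k] H),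
      g ((TensorProduct.rid k H) (lTensor H f u))
        = f ((TensorProduct.lid k H) (rTensor H g u)) := by
    intro f g u
    induction u using TensorProduct.induction_on with
    | zero => simp
    | tmul a c => simp [mul_comm]
    | add u v hu hv => simp only [map_add, hu, hv]
  have Klam : ∀ (q : H →ₗ[k] k) (h : H), lam (swr q h) = q 1 * lam h := by
    intro q h
    rw [lamval, lamval, swr_eq]
    exact bigK hS2 q h
  have Krho : ∀ (q : H →ₗ[k] k) (h : H), rho (swl q h) = q 1 * rho h := by
    intro q h
    rw [rhoval, rhoval, swl_eq]
    exact bigKm hS2 q h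
  have lam1 : lam 1 = (Module.finrank k H : k) := by
    rw [lamval, LinearMap.mulLeft_one, ← Module.End.one_eq_id, trace_one]
  have rho1 : rho 1 = (Module.finrank k H : k) := by
    rw [rhoval, LinearMap.mulRight_one, ← Module.End.one_eq_id, trace_one]
  have lamrho : ∀ h : H, lam h = rho h := by
    intro h
    have e3 : lam (swr rho h) = rho (swl lam h) := by
      rw [swr_eq, swl_eq]
      exact BR rho lam (Coalgebra.comul (R := k) h)
    rw [Klam rho h, Krho lam h, rho1, lam1] at e3
    exact mul_left_cancel₀ hdim e3
  have sep : ∀ (u v : H), (∀ q : H →ₗ[k] k, q u = q v) → u = v := by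
    intro u v hq
    apply b.ext_elem
    intro i
    simpa [Module.Basis.coord_apply] using hq (b.coord i)
  refine ⟨?_, ?_, ?_, ?_, ?_⟩
  · apply LinearMap.ext
    intro x
    rw [lamrho x, rhoval x, ← rhoval1 x]
  · intro h0
    apply hdim
    rw [← lam1, h0]
    simp
  · intro h
    apply sep
    intro q
    have h1 : q (swr lam h) = lam (swl q h) := by
      rw [swr_eq, swl_eq]
      exact BR lam q (Coalgebra.comul (R := k) h)
    rw [h1, lamrho (swl q h), Krho q h, ← lamrho h, map_smul, smul_eq_mul, mul_comm]
  · intro h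
    apply sep
    intro q
    have h1 : q (swl lam h) = lam (swr q h) := by
      rw [swr_eq, swl_eq]
      exact (BR q lam (Coalgebra.comul (R := k) h)).symm
    rw [h1, Klam q h, map_smul, smul_eq_mul, mul_comm]
  · intro x y
    rw [lamval, lamval, LinearMap.mulLeft_mul, LinearMap.mulLeft_mul]
    exact LinearMap.trace_comp_comm' _ _
end
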